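/- A pipe dream P simplifies to a reduced pipe dream D if and only if P is obtained from D by changing some (possibly empty) set of absorbable elbow tiles of D into crossing tiles. -/

import Mathlib

open scoped Classical

noncomputable section

/-! ### Pipe dreams and Demazure products -/

/-- A pipe dream: the set of crossing tiles (0-based positions). -/
abbrev PD := Finset (ℕ × ℕ)

/-- The simple reflection `s_i` (0-based: swaps `i` and `i+1`). -/
def sGen (i : ℕ) : Equiv.Perm ℕ := Equiv.swap i (i + 1)

/-- Coxeter length of a permutation of `ℕ`: the number of inversions. -/
noncomputable def clen (v : Equiv.Perm ℕ) : ℕ :=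
  Set.ncard {pq : ℕ × ℕ | pq.1 < pq.2 ∧ v pq.2 < v pq.1}

/-- One step of the Demazure (0-Hecke) product: multiply by `s_i` unless it drops length. -/
noncomputable def demStep (w : Equiv.Perm ℕ) (i : ℕ) : Equiv.Perm ℕ :=
  if clen w < clen (w * sGen i) then w * sGen i else w

/-- Demazure product of a word in the simple reflections. -/
noncomputable def demWord (word : List ℕ) : Equiv.Perm ℕ := word.foldl demStep 1

/-- A pipe dream fits in the `k × l` grid. -/
def InGrid (k l : ℕ) (P : PD) : Prop := ∀ pq ∈ P, pq.1 < k ∧ pq.2 < l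

/-- The crossing tiles of `P` in reading order: along rows, right to left,
top to bottom. -/
def posList (k l : ℕ) (P : PD) : List (ℕ × ℕ) :=
  (List.range k).flatMap fun i =>
    ((List.range l).reverse).filterMap fun j => if (i, j) ∈ P then some (i, j) else none

/-- The word of a pipe dream: the crossing tile at (0-based) `(i,j)` contributes the
letter `i + j` (antidiagonal index), read along rows right-to-left, top-to-bottom. -/
def pdWord (k l : ℕ) (P : PD) : List ℕ := (posList k l P).map fun pq => pq.1 + pq.2

/-- The Demazure product `δ(P)` of a pipe dream. -/
noncomputable def pdDelta (k l : ℕ) (P : PD) : Equiv.Perm ℕ := demWord (pdWord k l P)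

/-- `P` rotated through 180 degrees inside the `k × l` grid. -/
def rot180 (k l : ℕ) (P : PD) : PD := P.image fun pq => (k - 1 - pq.1, l - 1 - pq.2)

/-- The simplification of `P`: omit the `t`-th letter whenever the Demazure product of
the length-`t` prefix equals that of the length-`t+1` prefix (lexicographically first
subword with full Demazure product). -/
noncomputable def simplification (k l : ℕ) (P : PD) : PD :=
  P.filter fun pos => ∀ t : ℕ, (posList k l P)[t]? = some pos →
    demWord ((pdWord k l P).take (t + 1)) ≠ demWord ((pdWord k l P).take t)

/-! ### Partial permutations -/

/-- A `k × l` partial permutation, as the relation `rel p q` ⟺ "entry 1 at `(p,q)`"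
(0-based): at most one nonzero entry in each row and column. -/
def IsPartialPerm (k l : ℕ) (rel : ℕ → ℕ → Prop) : Prop :=
  (∀ p q, rel p q → p < k ∧ q < l) ∧
  (∀ p q q', rel p q → rel p q' → q = q') ∧
  (∀ p p' q, rel p q → rel p' q → p = p')

/-- `v ∈ S_∞` is a completion of the `k × l` partial permutation `rel`:
a (finitely supported) permutation whose upper-left `k × l` corner is `rel`. -/
def IsCompletion (k l : ℕ) (rel : ℕ → ℕ → Prop) (v : Equiv.Perm ℕ) : Prop :=
  (∃ N, ∀ i, N ≤ i → v i = i) ∧ ∀ p q, p < k → q < l → (rel p q ↔ v p = q)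

/-- `v = w̃` is the minimal-length completion of `rel`. -/
def IsMinCompletion (k l : ℕ) (rel : ℕ → ℕ → Prop) (v : Equiv.Perm ℕ) : Prop :=
  IsCompletion k l rel v ∧ ∀ v', IsCompletion k l rel v' → clen v ≤ clen v'

/-- The minimal-length completion `w̃` of a partial permutation. -/
noncomputable def minComp (k l : ℕ) (rel : ℕ → ℕ → Prop) : Equiv.Perm ℕ :=
  Classical.epsilon (IsMinCompletion k l rel)

/-- `P ∈ 𝒫(w)`: pipe dreams in the `k × l` grid with Demazure product `w̃`. -/
def PipeDreamsFor (k l : ℕ) (rel : ℕ → ℕ → Prop) (P : PD) : Prop :=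
  InGrid k l P ∧ pdDelta k l P = minComp k l rel


/-! ### Block decompositions and Zelevinsky permutations -/

/-- `rowSum r j = r 0 + ⋯ + r (j-1)`. -/
def rowSum (r : ℕ → ℕ) (j : ℕ) : ℕ := ∑ q ∈ Finset.range j, r q

/-- Total size `d = r 0 + ⋯ + r n`. -/
def dTot (n : ℕ) (r : ℕ → ℕ) : ℕ := rowSum r (n + 1)

/-- Global row `p` lies in block row `j` (block rows counted from the top, of heights
`r 0, …, r n`). -/
def InBlockRow (r : ℕ → ℕ) (j p : ℕ) : Prop := rowSum r j ≤ p ∧ p < rowSum r (j + 1)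

/-- Global column `q` lies in block column `i` *from the right* (widths `r 0, …, r n`
from the right). -/
def InBlockCol (n : ℕ) (r : ℕ → ℕ) (i q : ℕ) : Prop :=
  dTot n r - rowSum r (i + 1) ≤ q ∧ q < dTot n r - rowSum r i

/-- `v` is a Zelevinsky permutation for the block decomposition given by
`r 0, …, r n`: it is a `d × d` permutation matrix (fixes everything from `d` on),
the blocks `B_{ji}` with `i ≥ j + 2` vanish, and the nonzero entries proceed from
northwest to southeast within each block row and block column. -/
def IsZelevinsky (n : ℕ) (r : ℕ → ℕ) (v : Equiv.Perm ℕ) : Prop :=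
  (∀ p, dTot n r ≤ p → v p = p) ∧
  (∀ p, p < dTot n r → ∀ j i, j ≤ n → i ≤ n → InBlockRow r j p →
    InBlockCol n r i (v p) → i ≤ j + 1) ∧
  (∀ p p', p < p' → p' < dTot n r →
    ((∃ j ≤ n, InBlockRow r j p ∧ InBlockRow r j p') ∨
     (∃ i ≤ n, InBlockCol n r i (v p) ∧ InBlockCol n r i (v p'))) → v p < v p')

/-- The rank array of a Zelevinsky permutation: `r_{ij}` is the number of nonzero
entries of `v` in the blocks weakly southeast of `B_{ji}`. -/
def rankArray (n : ℕ) (r : ℕ → ℕ) (v : Equiv.Perm ℕ) (i j : ℕ) : ℕ :=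
  ((Finset.range (dTot n r)).filter fun p =>
    rowSum r j ≤ p ∧ dTot n r - rowSum r (i + 1) ≤ v p).card

/-- `v = v(Hom)`: the unique Zelevinsky permutation with entrywise maximal rank array. -/
def IsHomZel (n : ℕ) (r : ℕ → ℕ) (v : Equiv.Perm ℕ) : Prop :=
  IsZelevinsky n r v ∧ ∀ v', IsZelevinsky n r v' →
    ∀ i j, j ≤ i → i ≤ n → rankArray n r v' i j ≤ rankArray n r v i j

/-- `vm = v(m + r)` where `v = v(r)`: the Zelevinsky permutation for the ranks
`m + r 0, …, m + r n` whose rank array is obtained by adding `m` to every entry of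
the rank array of `v`. -/
def IsShiftedZel (n : ℕ) (r : ℕ → ℕ) (v : Equiv.Perm ℕ) (m : ℕ) (vm : Equiv.Perm ℕ) : Prop :=
  IsZelevinsky n (fun j => m + r j) vm ∧
  ∀ i j, j ≤ i → i ≤ n →
    rankArray n (fun j => m + r j) vm i j = m + rankArray n r v i j

/-- The Ferrers shape `D_Hom` of all positions strictly above the block
superantidiagonal (blocks `B_{ji}` with `i ≥ j + 2`). -/
def DHom (n : ℕ) (r : ℕ → ℕ) : PD :=
  (Finset.range (dTot n r) ×ˢ Finset.range (dTot n r)).filter fun pq =>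
    ∃ j ≤ n, ∃ i ≤ n, InBlockRow r j pq.1 ∧ InBlockCol n r i pq.2 ∧ j + 2 ≤ i

/-- `P(P_1, …, P_n)`: the `d × d` pipe dream with every block strictly above the block
superantidiagonal filled with crossing tiles, the superantidiagonal `r (j-1) × r j`
block in block row `j - 1` equal to `P j`, and all other blocks empty. -/
def assemble (n : ℕ) (r : ℕ → ℕ) (P : ℕ → PD) : PD :=
  (Finset.range (dTot n r) ×ˢ Finset.range (dTot n r)).filter fun pq =>
    (∃ j ≤ n, ∃ i ≤ n, InBlockRow r j pq.1 ∧ InBlockCol n r i pq.2 ∧ j + 2 ≤ i) ∨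
    (∃ j, 1 ≤ j ∧ j ≤ n ∧ InBlockRow r (j - 1) pq.1 ∧ InBlockCol n r j pq.2 ∧
      (pq.1 - rowSum r (j - 1), pq.2 - (dTot n r - rowSum r (j + 1))) ∈ P j)

/-! ### Lacing diagrams -/

/-- A lacing diagram for ranks `r 0, …, r n`: a list `w_1, …, w_n` of partial
permutations, `w_j` of size `r (j-1) × r j` (encoded as relations, with `L j` empty
for `j` out of range). -/
def IsLacingDiagram (n : ℕ) (r : ℕ → ℕ) (L : ℕ → ℕ → ℕ → Prop) : Prop :=
  (∀ j, 1 ≤ j → j ≤ n → IsPartialPerm (r (j - 1)) (r j) (L j)) ∧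
  (∀ j, j = 0 ∨ n < j → L j = fun _ _ => False)

/-- A choice of pipe dreams `P_1, …, P_n` with `P̌_j ∈ 𝒫(w_j)` for all `j`. -/
def LacingChoices (n : ℕ) (r : ℕ → ℕ) (L : ℕ → ℕ → ℕ → Prop) (P : ℕ → PD) : Prop :=
  ∀ j, 1 ≤ j → j ≤ n → InGrid (r (j - 1)) (r j) (P j) ∧
    PipeDreamsFor (r (j - 1)) (r j) (L j) (rot180 (r (j - 1)) (r j) (P j))

/-- The Demazure product of the lacing diagram `L` is the rank array of the Zelevinsky
permutation `v`: for some (equivalently every) choice of pipe dreams `P_j` with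
`P̌_j ∈ 𝒫(w_j)`, the Demazure product of `P(P_1, …, P_n)` is `v`. -/
def LacingDem (n : ℕ) (r : ℕ → ℕ) (L : ℕ → ℕ → ℕ → Prop) (v : Equiv.Perm ℕ) : Prop :=
  (∃ P, LacingChoices n r L P) ∧
  ∀ P, LacingChoices n r L P →
    pdDelta (dTot n r) (dTot n r) (assemble n r P) = v

/-- `L(r)`: lacing diagrams whose Demazure product is the rank array of `v = v(r)`. -/
def LacingSet (n : ℕ) (r : ℕ → ℕ) (v : Equiv.Perm ℕ) : Set (ℕ → ℕ → ℕ → Prop) :=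
  {L | IsLacingDiagram n r L ∧ LacingDem n r L v}

/-- `m + w`: let the partial permutation act on `{m, m+1, …}` instead of `{0, 1, …}`. -/
def shiftRel (m : ℕ) (rel : ℕ → ℕ → Prop) : ℕ → ℕ → Prop :=
  fun p q => m ≤ p ∧ m ≤ q ∧ rel (p - m) (q - m)

/-- `m + w` for a lacing diagram, componentwise. -/
def shiftDiag (m : ℕ) (L : ℕ → ℕ → ℕ → Prop) : ℕ → ℕ → ℕ → Prop :=
  fun j => shiftRel m (L j)

/-- `l(w) = Σ_j l(w̃_j)` for a lacing diagram. -/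
noncomputable def lenLacing (n : ℕ) (r : ℕ → ℕ) (L : ℕ → ℕ → ℕ → Prop) : ℕ :=
  ∑ j ∈ Finset.Icc 1 n, clen (minComp (r (j - 1)) (r j) (L j))


/-! ### Double Grothendieck polynomials

We encode a Laurent polynomial in the row alphabet `z` and column alphabet `ż` as an
honest polynomial in the variables `z i = X (Sum.inl i)` and `b j = X (Sum.inr j)`,
where `b j` stands for the reciprocal `1/ż j` (all the `G`'s are polynomials in the
`z i` and the `ż j⁻¹`; in particular `1 - z i / ż j = 1 - z i * b j`). -/

/-- The ambient polynomial ring. -/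
abbrev GR : Type := MvPolynomial (ℕ ⊕ ℕ) ℚ

/-- The row variable `z i` (0-based). -/
noncomputable def Zv (i : ℕ) : GR := MvPolynomial.X (Sum.inl i)

/-- The column variable `b j = 1 / ż j` (0-based). -/
noncomputable def Bv (j : ℕ) : GR := MvPolynomial.X (Sum.inr j)

/-- Exact division in a ring (junk value `0` if `b ∤ a`). -/
noncomputable def exactDiv (a b : GR) : GR := if h : ∃ c, a = b * c then h.choose else 0

/-- The `i`-th Demazure operator
`∂_i f = (z_{i+1} f(z_i, z_{i+1}) - z_i f(z_{i+1}, z_i)) / (z_{i+1} - z_i)`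
(0-based `i`; it acts on the `z` alphabet only). -/
noncomputable def demOp (i : ℕ) (f : GR) : GR :=
  exactDiv
    (Zv (i + 1) * f -
      Zv i * (MvPolynomial.rename (fun s => Equiv.swap (Sum.inl i) (Sum.inl (i + 1)) s) f))
    (Zv (i + 1) - Zv i)

/-- The longest element `w_0` of `S_k` (0-based; fixes everything from `k` on). -/
def w0 (k : ℕ) : Equiv.Perm ℕ :=
  Function.Involutive.toPerm (fun i => if i < k then k - 1 - i else i)
    (by intro i; dsimp only; split_ifs <;> omega)

/-- The top double Grothendieck polynomial
`G_{w_0}(z/ż) = ∏_{i + j ≤ k} (1 - z_i/ż_j)` (1-based indices `i, j ≥ 1`). -/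
noncomputable def GrothTop (k : ℕ) : GR :=
  ∏ pq ∈ (Finset.range k ×ˢ Finset.range k).filter (fun pq => pq.1 + pq.2 + 2 ≤ k),
    (1 - Zv pq.1 * Bv pq.2)

/-- Auxiliary fuelled recursion computing double Grothendieck polynomials via
`G_{v s_i} = ∂_i G_v` whenever `l(v s_i) < l(v)`. -/
noncomputable def GrothAux (k : ℕ) : ℕ → Equiv.Perm ℕ → GR
  | 0, v => if v = w0 k then GrothTop k else 0
  | fuel + 1, v =>
    if v = w0 k then GrothTop k
    else if h : ∃ i, i + 2 ≤ k ∧ v i < v (i + 1) then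
      demOp (Nat.find h) (GrothAux k fuel (v * sGen (Nat.find h)))
    else 0

/-- The double Grothendieck polynomial `G_v(z/ż)` of `v ∈ S_k`. -/
noncomputable def Groth (k : ℕ) (v : Equiv.Perm ℕ) : GR := GrothAux k (k * k) v

/-- The least `N` such that `v` fixes everything from `N` on. -/
noncomputable def permBound (v : Equiv.Perm ℕ) : ℕ := sInf {N | ∀ i, N ≤ i → v i = i}

/-- The double Grothendieck polynomial of a finitely supported permutation
(independent of the choice of `k`). -/
noncomputable def GrothPerm (v : Equiv.Perm ℕ) : GR := Groth (permBound v) v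


/-! ### Quiver alphabets

For ranks `r 0, …, r n` with `d = r 0 + ⋯ + r n`, the row alphabet
`x = x^0, …, x^n` is the concatenation of alphabets of sizes `r 0, …, r n`: the global
row variable `z p` (for `p` in block row `j` at offset `a`) *is* the letter `x^j_{a+1}`.
Likewise the column alphabet `ȳ = y^n, …, y^0` is the concatenation of alphabets of
sizes `r n, …, r 0`: the global column variable `ż q` for `q` in block column `i`
(from the right) at offset `a` (from the left of the block) is the letter `y^i_{a+1}`.
Thus `G_{v(r)}(x/ȳ)` is just `Groth d (v(r))`. -/

/-- The block row containing global row `p`. -/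
noncomputable def blockRowOf (r : ℕ → ℕ) (p : ℕ) : ℕ :=
  if h : ∃ j, p < rowSum r (j + 1) then Nat.find h else 0

/-- The block column (from the right) containing global column `q`. -/
noncomputable def blockColOf (n : ℕ) (r : ℕ → ℕ) (q : ℕ) : ℕ :=
  if h : ∃ i, dTot n r ≤ q + rowSum r (i + 1) then Nat.find h else 0

/-- The row variable at global row `p` after reversing each alphabet `x^j` in place. -/
noncomputable def revRow (r : ℕ → ℕ) (p : ℕ) : ℕ :=
  rowSum r (blockRowOf r p) + (r (blockRowOf r p) - 1 - (p - rowSum r (blockRowOf r p)))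

/-- The column variable at global column `q` after reversing each alphabet `y^i` in
place. -/
noncomputable def revCol (n : ℕ) (r : ℕ → ℕ) (q : ℕ) : ℕ :=
  (dTot n r - rowSum r (blockColOf n r q + 1)) +
    (r (blockColOf n r q) - 1 - (q - (dTot n r - rowSum r (blockColOf n r q + 1))))

/-- The exponential reverse monomial `(1 - x̃/ỹ)^P = ∏_{+ ∈ P} (1 - x̃_+/ỹ_+)`. -/
noncomputable def ERM (n : ℕ) (r : ℕ → ℕ) (P : PD) : GR :=
  ∏ pq ∈ P, (1 - Zv (revRow r pq.1) * Bv (revCol n r pq.2))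

/-- Set the last `ℓ` variables of every finite alphabet `x^j` and `y^i` equal to `1`. -/
noncomputable def setLastOnes (n : ℕ) (r : ℕ → ℕ) (ℓ : ℕ) : GR →ₐ[ℚ] GR :=
  MvPolynomial.aeval fun s =>
    match s with
    | Sum.inl p =>
      if ∃ j ≤ n, InBlockRow r j p ∧ rowSum r (j + 1) ≤ p + ℓ then 1 else Zv p
    | Sum.inr q =>
      if ∃ i ≤ n, InBlockCol n r i q ∧ dTot n r - rowSum r i ≤ q + ℓ then 1 else Bv q

/-- For rank lists `big` and `small` (with `small j ≤ big j`): keep the first `small j`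
letters of each alphabet of sizes `big 0, …, big n` (relabelling them as the alphabets
of sizes `small 0, …, small n`) and set all remaining letters equal to `1`. -/
noncomputable def restrictAlph (n : ℕ) (big small : ℕ → ℕ) : GR →ₐ[ℚ] GR :=
  MvPolynomial.aeval fun s =>
    match s with
    | Sum.inl p =>
      if p < dTot n big then
        if p - rowSum big (blockRowOf big p) < small (blockRowOf big p) then
          Zv (rowSum small (blockRowOf big p) + (p - rowSum big (blockRowOf big p)))
        else 1
      else Zv p
    | Sum.inr q =>
      if q < dTot n big then
        if q - (dTot n big - rowSum big (blockColOf n big q + 1)) < small (blockColOf n big q)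
        then
          Bv ((dTot n small - rowSum small (blockColOf n big q + 1)) +
            (q - (dTot n big - rowSum big (blockColOf n big q + 1))))
        else 1
      else Bv q

/-- Keep the first `k` letters of the (generic) row alphabet and the first `l` letters
of the column alphabet, setting all further letters equal to `1`. -/
noncomputable def truncAlph (k l : ℕ) : GR →ₐ[ℚ] GR :=
  MvPolynomial.aeval fun s =>
    match s with
    | Sum.inl p => if p < k then Zv p else 1
    | Sum.inr q => if q < l then Bv q else 1

/-- Substitute the generic alphabets `z, ż` by the alphabets `x^{j-1}, y^j`:
`G(z/ż) ↦ G(x^{j-1}/y^j)`. -/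
noncomputable def placeBlock (n : ℕ) (r : ℕ → ℕ) (j : ℕ) : GR →ₐ[ℚ] GR :=
  MvPolynomial.rename
    (Sum.map (fun a => rowSum r (j - 1) + a) (fun a => (dTot n r - rowSum r (j + 1)) + a))

/-- `m + v`: let the permutation act on `{m, m+1, …}` instead of `{0, 1, …}`. -/
noncomputable def shiftPerm (m : ℕ) (v : Equiv.Perm ℕ) : Equiv.Perm ℕ :=
  v.viaEmbedding ⟨fun a => m + a, add_right_injective m⟩

/-! ### Stable double Grothendieck polynomials -/

/-- The stable double Grothendieck polynomial of a `k × l` partial permutation,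
evaluated in alphabets of sizes `k'` and `l'`:
`lim_{m → ∞} G_{m+w}(z_{k'}/ż_{l'})`, the (eventually constant) limit of the double
Grothendieck polynomials of `m + w` with all variables beyond the first `k'` (resp.
`l'`) set equal to `1`. -/
noncomputable def stableTruncPP (k l k' l' : ℕ) (rel : ℕ → ℕ → Prop) : GR :=
  Classical.epsilon fun g => ∃ M, ∀ m, M ≤ m →
    truncAlph k' l' (GrothPerm (minComp (m + k) (m + l) (shiftRel m rel))) = g

/-- `Ĝ_w(z_k/ż_l)` for a `k × l` partial permutation `w`. -/
noncomputable def stableGrothPP (k l : ℕ) (rel : ℕ → ℕ → Prop) : GR :=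
  stableTruncPP k l k l rel

/-- `Ĝ_μ(z_{k'}/ż_{l'})` for a (finitely supported) permutation `μ`. -/
noncomputable def stableTruncPerm (k' l' : ℕ) (μ : Equiv.Perm ℕ) : GR :=
  Classical.epsilon fun g => ∃ M, ∀ m, M ≤ m →
    truncAlph k' l' (GrothPerm (shiftPerm m μ)) = g

/-- `Ĝ_w(x/ȳ) = Ĝ_{w_1}(x^0/y^1) ⋯ Ĝ_{w_n}(x^{n-1}/y^n)` for a lacing diagram. -/
noncomputable def GhatLacing (n : ℕ) (r : ℕ → ℕ) (L : ℕ → ℕ → ℕ → Prop) : GR :=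
  ∏ j ∈ Finset.Icc 1 n, placeBlock n r j (stableGrothPP (r (j - 1)) (r j) (L j))

/-- A (finitely supported) permutation is grassmannian if it has at most one descent. -/
def IsGrassmannian (μ : Equiv.Perm ℕ) : Prop :=
  (∃ N, ∀ i, N ≤ i → μ i = i) ∧ ∀ i i', μ (i + 1) < μ i → μ (i' + 1) < μ i' → i = i'

/-- Grassmannian lacing diagrams: those whose minimal completions are all grassmannian. -/
def GrassLacingSet (n : ℕ) (r : ℕ → ℕ) : Set (ℕ → ℕ → ℕ → Prop) :=
  {M | IsLacingDiagram n r M ∧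
    ∀ j, 1 ≤ j → j ≤ n → IsGrassmannian (minComp (r (j - 1)) (r j) (M j))}

/-! ### Pipes, top pipe dreams and absorbable elbows -/

/-- One step of a pipe through the tiling determined by `P` in a grid with `l` columns.
A state is `(i, j, fromW)`: the pipe is at tile `(i, j)`, having entered from the west
(`fromW = true`) or from the south (`fromW = false`).  At a crossing the pipe goes
straight; at an elbow it turns (west ↝ north, south ↝ east).  Pipes move only north
and east; `none` means the pipe exits the grid. -/
def nextState (l : ℕ) (P : PD) : ℕ × ℕ × Bool → Option (ℕ × ℕ × Bool) := fun s =>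
  let i := s.1
  let j := s.2.1
  let fromW := s.2.2
  if ((i, j) ∈ P ∧ fromW = true) ∨ ((i, j) ∉ P ∧ fromW = false) then
    -- exit east
    if j + 1 < l then some (i, j + 1, true) else none
  else
    -- exit north
    if 0 < i then some (i - 1, j, false) else none

/-- The (fuelled) forward trajectory of a pipe from a given state. -/
noncomputable def traj (l : ℕ) (P : PD) : ℕ → ℕ × ℕ × Bool → List (ℕ × ℕ × Bool)
  | 0, s => [s]
  | fuel + 1, s =>
    s :: (match nextState l P s with
      | none => []
      | some s' => traj l P fuel s')

/-- The pipe of `P` moving forward from state `s` passes through the tile `c`. -/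
def passesThrough (k l : ℕ) (P : PD) (s : ℕ × ℕ × Bool) (c : ℕ × ℕ) : Prop :=
  ∃ st ∈ traj l P (k + l + 2) s, (st.1, st.2.1) = c

/-- An elbow tile `e` of the pipe dream `D` (in the `k × l` grid) is absorbable if the
two pipes passing through it cross in a crossing tile (necessarily to its northeast). -/
def Absorbable (k l : ℕ) (D : PD) (e : ℕ × ℕ) : Prop :=
  e.1 < k ∧ e.2 < l ∧ e ∉ D ∧
  ∃ c ∈ D, passesThrough k l D (e.1, e.2, true) c ∧ passesThrough k l D (e.1, e.2, false) c

/-- `D` is the top pipe dream of the `k × l` partial permutation `rel`: the unique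
reduced pipe dream for `rel` having no elbow tile due north of a crossing tile. -/
def IsTopPipeDream (k l : ℕ) (rel : ℕ → ℕ → Prop) (D : PD) : Prop :=
  PipeDreamsFor k l rel D ∧ D.card = clen (minComp k l rel) ∧
  ∀ i i' j, i < i' → (i', j) ∈ D → (i, j) ∈ D

/-- `α|P`: add `α` columns of crossing tiles on the left side of the `k × l`
pipe dream `P`. -/
def addCols (k α : ℕ) (P : PD) : PD :=
  (Finset.range k ×ˢ Finset.range α) ∪ P.image fun pq => (pq.1, pq.2 + α)



/-! ### Auxiliary development for stmt15 -/

section Stmt15Aux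

/-- Finitely supported permutation. -/
def FS (w : Equiv.Perm ℕ) : Prop := ∃ N, ∀ i, N ≤ i → w i = i

lemma fs_lt {w : Equiv.Perm ℕ} {N : ℕ} (hN : ∀ i, N ≤ i → w i = i) {p : ℕ}
    (hp : p < N) : w p < N := by
  by_contra h
  push_neg at h
  have h1 : w (w p) = w p := hN _ h
  have h2 : w p = p := w.injective h1
  omega

lemma sGen_apply (i x : ℕ) : sGen i x = if x = i then i + 1 else if x = i + 1 then i else x := by
  simp [sGen, Equiv.swap_apply_def]

lemma fs_one : FS (1 : Equiv.Perm ℕ) := ⟨0, fun i _ => rfl⟩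

lemma fs_mul_sGen {w : Equiv.Perm ℕ} (hw : FS w) (i : ℕ) : FS (w * sGen i) := by
  obtain ⟨N, hN⟩ := hw
  refine ⟨N + i + 2, fun x hx => ?_⟩
  have h1 : sGen i x = x := by rw [sGen_apply]; split_ifs <;> omega
  have : (w * sGen i) x = w x := by rw [Equiv.Perm.mul_apply, h1]
  rw [this, hN x (by omega)]

lemma clen_eq_card {w : Equiv.Perm ℕ} {N : ℕ} (hN : ∀ i, N ≤ i → w i = i) :
    clen w = ((Finset.range N ×ˢ Finset.range N).filter
      (fun pq => pq.1 < pq.2 ∧ w pq.2 < w pq.1)).card := by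
  rw [clen, ← Set.ncard_coe_finset]
  congr 1
  ext ⟨p, q⟩
  simp only [Set.mem_setOf_eq, Finset.coe_filter, Finset.mem_product, Finset.mem_range]
  constructor
  · rintro ⟨h1, h2⟩
    have hq : q < N := by
      by_contra hq
      push_neg at hq
      have hwq : w q = q := hN q hq
      rcases lt_or_ge p N with hp | hp
      · have := fs_lt hN hp; omega
      · have := hN p hp; omega
    exact ⟨⟨by omega, hq⟩, h1, h2⟩
  · rintro ⟨_, h⟩; exact h

lemma clen_one : clen (1 : Equiv.Perm ℕ) = 0 := by
  rw [clen_eq_card (N := 0) (fun i _ => rfl)]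
  simp

lemma sGen_sGen (i x : ℕ) : sGen i (sGen i x) = x := by
  simp [sGen]

lemma clen_mul_sGen_lt {w : Equiv.Perm ℕ} (hw : FS w) {i : ℕ} (h : w i < w (i + 1)) :
    clen (w * sGen i) = clen w + 1 := by
  obtain ⟨N₀, hN₀⟩ := hw
  set N := N₀ + i + 2 with hNdef
  have hN : ∀ x, N ≤ x → w x = x := fun x hx => hN₀ x (by omega)
  have hiN : i + 1 < N := by omega
  have hsfix : ∀ x, N ≤ x → sGen i x = x := by
    intro x hx; rw [sGen_apply]; split_ifs <;> omega
  have hNs : ∀ x, N ≤ x → (w * sGen i) x = x := by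
    intro x hx; rw [Equiv.Perm.mul_apply, hsfix x hx, hN x hx]
  have hsrange : ∀ x, x < N → sGen i x < N := by
    intro x hx; rw [sGen_apply]; split_ifs <;> omega
  rw [clen_eq_card hNs, clen_eq_card hN]
  set S := Finset.range N ×ˢ Finset.range N with hS
  set A := S.filter (fun pq => pq.1 < pq.2 ∧ (w * sGen i) pq.2 < (w * sGen i) pq.1) with hA
  set B := S.filter (fun pq => pq.1 < pq.2 ∧ w pq.2 < w pq.1) with hB
  have hmemS : ((i, i+1) : ℕ × ℕ) ∈ S := by
    simp only [hS, Finset.mem_product, Finset.mem_range]; omega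
  have hiA : ((i, i+1) : ℕ × ℕ) ∈ A := by
    simp only [hA, Finset.mem_filter]
    refine ⟨hmemS, by omega, ?_⟩
    simp only [Equiv.Perm.mul_apply]
    have e1 : sGen i (i+1) = i := by rw [sGen_apply]; split_ifs <;> omega
    have e2 : sGen i i = i + 1 := by rw [sGen_apply]; split_ifs <;> omega
    rw [e1, e2]; exact h
  have hiB : ((i, i+1) : ℕ × ℕ) ∉ B := by
    simp only [hB, Finset.mem_filter]
    push_neg
    intro _ _
    omega
  have hcard : (A.erase (i, i+1)).card = (B.erase (i, i+1)).card := by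
    apply Finset.card_bij' (i := fun pq _ => (sGen i pq.1, sGen i pq.2))
      (j := fun pq _ => (sGen i pq.1, sGen i pq.2))
    · intro ⟨p, q⟩ hpq
      simp only [Finset.mem_erase, hA, Finset.mem_filter, hS, Finset.mem_product,
        Finset.mem_range] at hpq
      obtain ⟨hne, ⟨hp, hq⟩, hlt, hinv⟩ := hpq
      simp only [Equiv.Perm.mul_apply] at hinv
      have hval : ∀ x, sGen i x = if x = i then i + 1 else if x = i + 1 then i else x :=
        fun x => sGen_apply i x
      have horder : sGen i p < sGen i q := by
        rw [hval p, hval q]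
        have : ¬(p = i ∧ q = i + 1) := by
          intro ⟨h1, h2⟩; exact hne (by rw [h1, h2])
        split_ifs <;> omega
      simp only [Finset.mem_erase, hB, Finset.mem_filter, hS, Finset.mem_product,
        Finset.mem_range]
      refine ⟨?_, ⟨hsrange p hp, hsrange q hq⟩, horder, hinv⟩
      intro hcon
      have h1 : sGen i p = i := congrArg Prod.fst hcon
      have h2 : sGen i q = i + 1 := congrArg Prod.snd hcon
      rw [hval p] at h1; rw [hval q] at h2
      split_ifs at h1 h2 <;> omega
    · intro ⟨p, q⟩ hpq
      simp only [Finset.mem_erase, hB, Finset.mem_filter, hS, Finset.mem_product,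
        Finset.mem_range] at hpq
      obtain ⟨hne, ⟨hp, hq⟩, hlt, hinv⟩ := hpq
      have hval : ∀ x, sGen i x = if x = i then i + 1 else if x = i + 1 then i else x :=
        fun x => sGen_apply i x
      have horder : sGen i p < sGen i q := by
        rw [hval p, hval q]
        have : ¬(p = i ∧ q = i + 1) := by
          intro ⟨h1, h2⟩; exact hne (by rw [h1, h2])
        split_ifs <;> omega
      simp only [Finset.mem_erase, hA, Finset.mem_filter, hS, Finset.mem_product,
        Finset.mem_range]
      refine ⟨?_, ⟨hsrange p hp, hsrange q hq⟩, horder, ?_⟩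
      · intro hcon
        have h1 : sGen i p = i := congrArg Prod.fst hcon
        have h2 : sGen i q = i + 1 := congrArg Prod.snd hcon
        rw [hval p] at h1; rw [hval q] at h2
        split_ifs at h1 h2 <;> omega
      · simp only [Equiv.Perm.mul_apply, sGen_sGen]
        exact hinv
    · intro ⟨p, q⟩ _; simp [sGen_sGen]
    · intro ⟨p, q⟩ _; simp [sGen_sGen]
  have hAcard : A.card = (A.erase (i, i+1)).card + 1 := by
    rw [Finset.card_erase_of_mem hiA]
    have : 0 < A.card := Finset.card_pos.mpr ⟨_, hiA⟩
    omega
  have hBcard : B.card = (B.erase (i, i+1)).card := by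
    rw [Finset.erase_eq_self.mpr hiB]
  omega

lemma clen_mul_sGen_gt {w : Equiv.Perm ℕ} (hw : FS w) {i : ℕ} (h : w (i + 1) < w i) :
    clen w = clen (w * sGen i) + 1 := by
  have hws : FS (w * sGen i) := fs_mul_sGen hw i
  have e1 : (w * sGen i) i = w (i + 1) := by
    rw [Equiv.Perm.mul_apply, sGen_apply]; split_ifs <;> omega
  have e2 : (w * sGen i) (i + 1) = w i := by
    rw [Equiv.Perm.mul_apply, sGen_apply]; split_ifs <;> omega
  have := clen_mul_sGen_lt hws (i := i) (by omega)
  have hww : w * sGen i * sGen i = w := by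
    ext x; simp only [Equiv.Perm.mul_apply, sGen_sGen]
  rw [hww] at this
  omega

lemma perm_ne_succ (w : Equiv.Perm ℕ) (i : ℕ) : w i ≠ w (i + 1) :=
  fun h => by have := w.injective h; omega

lemma demStep_of_lt {w : Equiv.Perm ℕ} (hw : FS w) {i : ℕ} (h : w i < w (i + 1)) :
    demStep w i = w * sGen i := by
  rw [demStep, if_pos]
  rw [clen_mul_sGen_lt hw h]; omega

lemma demStep_of_gt {w : Equiv.Perm ℕ} (hw : FS w) {i : ℕ} (h : w (i + 1) < w i) :
    demStep w i = w := by
  rw [demStep, if_neg]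
  have := clen_mul_sGen_gt hw h
  omega

lemma fs_demStep {w : Equiv.Perm ℕ} (hw : FS w) (i : ℕ) : FS (demStep w i) := by
  rcases lt_or_gt_of_ne (perm_ne_succ w i) with h | h
  · rw [demStep_of_lt hw h]; exact fs_mul_sGen hw i
  · rw [demStep_of_gt hw h]; exact hw

lemma clen_demStep_le {w : Equiv.Perm ℕ} (hw : FS w) (i : ℕ) :
    clen (demStep w i) ≤ clen w + 1 := by
  rcases lt_or_gt_of_ne (perm_ne_succ w i) with h | h
  · rw [demStep_of_lt hw h, clen_mul_sGen_lt hw h]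
  · rw [demStep_of_gt hw h]; omega

lemma clen_demStep_ge {w : Equiv.Perm ℕ} (hw : FS w) (i : ℕ) :
    clen w ≤ clen (demStep w i) := by
  rcases lt_or_gt_of_ne (perm_ne_succ w i) with h | h
  · rw [demStep_of_lt hw h, clen_mul_sGen_lt hw h]; omega
  · rw [demStep_of_gt hw h]

lemma fs_foldl {w : Equiv.Perm ℕ} (hw : FS w) (ws : List ℕ) :
    FS (List.foldl demStep w ws) := by
  induction ws generalizing w with
  | nil => exact hw
  | cons a tl ih => exact ih (fs_demStep hw a)

lemma fs_demWord (ws : List ℕ) : FS (demWord ws) := fs_foldl fs_one ws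

lemma clen_foldl_le {w : Equiv.Perm ℕ} (hw : FS w) (ws : List ℕ) :
    clen (List.foldl demStep w ws) ≤ clen w + ws.length := by
  induction ws generalizing w with
  | nil => simp
  | cons a tl ih =>
    simp only [List.foldl_cons, List.length_cons]
    have := ih (fs_demStep hw a)
    have := clen_demStep_le hw a
    omega

lemma clen_demWord_le (ws : List ℕ) : clen (demWord ws) ≤ ws.length := by
  have := clen_foldl_le fs_one ws
  rwa [clen_one, zero_add] at this

lemma demWord_append (xs ys : List ℕ) :
    demWord (xs ++ ys) = List.foldl demStep (demWord xs) ys := by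
  rw [demWord, List.foldl_append]; rfl

lemma demWord_concat (xs : List ℕ) (a : ℕ) :
    demWord (xs ++ [a]) = demStep (demWord xs) a := by
  rw [demWord_append]; rfl

lemma clen_demWord_take {ws : List ℕ} (h : clen (demWord ws) = ws.length)
    {t : ℕ} (ht : t ≤ ws.length) : clen (demWord (ws.take t)) = t := by
  have h1 : clen (demWord (ws.take t)) ≤ t := by
    have := clen_demWord_le (ws.take t)
    rwa [List.length_take, min_eq_left ht] at this
  have h2 : clen (demWord ws) ≤ clen (demWord (ws.take t)) + (ws.length - t) := by
    conv_lhs => rw [← List.take_append_drop t ws]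
    rw [demWord_append]
    have := clen_foldl_le (fs_demWord (ws.take t)) (ws.drop t)
    rwa [List.length_drop] at this
  omega

lemma reduced_step {ws : List ℕ} {a : ℕ}
    (h1 : clen (demWord ws) = ws.length)
    (h2 : clen (demWord (ws ++ [a])) = ws.length + 1) :
    demWord ws a < demWord ws (a + 1) ∧ demWord (ws ++ [a]) = demWord ws * sGen a := by
  have hfs := fs_demWord ws
  rcases lt_or_gt_of_ne (perm_ne_succ (demWord ws) a) with h | h
  · exact ⟨h, by rw [demWord_concat, demStep_of_lt hfs h]⟩
  · exfalso
    rw [demWord_concat, demStep_of_gt hfs h] at h2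
    omega


/-! #### Reading order and `posList` -/

/-- Reading order: `x` is read strictly before `e`. -/
def readLT (x e : ℕ × ℕ) : Prop := x.1 < e.1 ∨ (x.1 = e.1 ∧ e.2 < x.2)

instance : IsAntisymm (ℕ × ℕ) readLT :=
  ⟨fun a b h1 h2 => by simp only [readLT] at h1 h2; exfalso; omega⟩

/-- All grid positions in reading order. -/
def allPos (k l : ℕ) : List (ℕ × ℕ) :=
  (List.range k).flatMap fun i => ((List.range l).reverse).map fun j => (i, j)

lemma mem_allPos {k l : ℕ} {x : ℕ × ℕ} : x ∈ allPos k l ↔ x.1 < k ∧ x.2 < l := by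
  simp only [allPos, List.mem_flatMap, List.mem_map, List.mem_reverse, List.mem_range]
  constructor
  · rintro ⟨i, hi, j, hj, rfl⟩; exact ⟨hi, hj⟩
  · rintro ⟨h1, h2⟩; exact ⟨x.1, h1, x.2, h2, rfl⟩

lemma pairwise_allPos (k l : ℕ) : (allPos k l).Pairwise readLT := by
  induction k with
  | zero => simp [allPos]
  | succ k ih =>
    have : allPos (k+1) l = allPos k l ++ ((List.range l).reverse).map fun j => (k, j) := by
      rw [allPos, allPos, List.range_succ, List.flatMap_append, List.flatMap_singleton]
    rw [this, List.pairwise_append]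
    refine ⟨ih, ?_, ?_⟩
    · have h1 : ((List.range l).reverse).Pairwise (fun a b => b < a) := by
        rw [List.pairwise_reverse]
        exact List.pairwise_lt_range
      refine (List.pairwise_map.mpr ?_)
      exact h1.imp (fun {a b} h => by right; exact ⟨rfl, h⟩)
    · intro x hx y hy
      have hx1 : x.1 < k := (mem_allPos.mp hx).1
      have : y.1 = k := by
        simp only [List.mem_map] at hy
        obtain ⟨j, _, rfl⟩ := hy
        rfl
      left; omega

lemma nodup_allPos (k l : ℕ) : (allPos k l).Nodup :=
  (pairwise_allPos k l).imp (fun {a b} h => by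
    intro hab; subst hab; simp only [readLT] at h; omega)

lemma filterMap_row {α β : Type*} (L : List α) (f : α → β) (p : β → Prop)
    [DecidablePred p] :
    L.filterMap (fun j => if p (f j) then some (f j) else none) =
      (L.map f).filter (fun x => decide (p x)) := by
  induction L with
  | nil => rfl
  | cons a tl ih =>
    simp only [List.filterMap_cons, List.map_cons, List.filter_cons]
    by_cases h : p (f a)
    · simp only [if_pos h, decide_eq_true h, ih]; rfl
    · simp only [if_neg h, ih]
      have hd : (decide (p (f a))) = false := decide_eq_false h
      rw [hd]
      simp

lemma filter_flatMap {α β : Type*} (L : List α) (g : α → List β) (p : β → Bool) :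
    (L.flatMap g).filter p = L.flatMap (fun a => (g a).filter p) := by
  induction L with
  | nil => rfl
  | cons a tl ih => simp only [List.flatMap_cons, List.filter_append, ih]

lemma posList_eq_filter (k l : ℕ) (P : PD) :
    posList k l P = (allPos k l).filter (fun x => decide (x ∈ P)) := by
  rw [posList, allPos, filter_flatMap]
  congr 1
  funext i
  exact filterMap_row ((List.range l).reverse) (fun j => (i, j)) (fun x => x ∈ P)

lemma mem_posList {k l : ℕ} {P : PD} {x : ℕ × ℕ} :
    x ∈ posList k l P ↔ x ∈ P ∧ x.1 < k ∧ x.2 < l := by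
  rw [posList_eq_filter, List.mem_filter]
  simp [mem_allPos, And.comm]

lemma nodup_posList (k l : ℕ) (P : PD) : (posList k l P).Nodup :=
  (posList_eq_filter k l P) ▸ (nodup_allPos k l).filter _

lemma pairwise_posList (k l : ℕ) (P : PD) : (posList k l P).Pairwise readLT :=
  (posList_eq_filter k l P) ▸ (pairwise_allPos k l).sublist List.filter_sublist

lemma toFinset_posList {k l : ℕ} {P : PD} (h : InGrid k l P) :
    (posList k l P).toFinset = P := by
  ext x
  rw [List.mem_toFinset, mem_posList]
  exact ⟨fun h1 => h1.1, fun hx => ⟨hx, h x hx⟩⟩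

lemma length_posList {k l : ℕ} {P : PD} (h : InGrid k l P) :
    (posList k l P).length = P.card := by
  calc (posList k l P).length = (posList k l P).toFinset.card :=
        (List.toFinset_card_of_nodup (nodup_posList k l P)).symm
    _ = P.card := by rw [toFinset_posList h]

lemma posList_subset {k l : ℕ} {P D : PD} (hsub : D ⊆ P) :
    posList k l D = (posList k l P).filter (fun x => decide (x ∈ D)) := by
  rw [posList_eq_filter, posList_eq_filter, List.filter_filter]
  apply List.filter_congr
  intro x _
  by_cases hx : x ∈ D
  · simp [hx, hsub hx]
  · simp [hx]

lemma sorted_eq_of_mem_iff {L1 L2 : List (ℕ × ℕ)} (h1 : L1.Pairwise readLT)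
    (h2 : L2.Pairwise readLT) (n1 : L1.Nodup) (n2 : L2.Nodup)
    (hmem : ∀ x, x ∈ L1 ↔ x ∈ L2) : L1 = L2 := by
  apply List.Perm.eq_of_pairwise (fun a b _ _ ha hb => antisymm (r := readLT) ha hb) h1 h2 ?_
  exact (List.perm_ext_iff_of_nodup n1 n2).mpr hmem


/-! #### Trajectories -/

lemma nextState_eq (l : ℕ) (P : PD) (s : ℕ × ℕ × Bool) :
    nextState l P s =
      if ((s.1, s.2.1) ∈ P ∧ s.2.2 = true) ∨ ((s.1, s.2.1) ∉ P ∧ s.2.2 = false) then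
        (if s.2.1 + 1 < l then some (s.1, s.2.1 + 1, true) else none)
      else (if 0 < s.1 then some (s.1 - 1, s.2.1, false) else none) := rfl

/-- `n`-fold iteration of `nextState`. -/
def stepN (l : ℕ) (P : PD) : ℕ → ℕ × ℕ × Bool → Option (ℕ × ℕ × Bool)
  | 0, s => some s
  | n + 1, s => (nextState l P s).bind (stepN l P n)

/-- The pipe from `s` reaches state `x`. -/
def Reach (l : ℕ) (P : PD) (s x : ℕ × ℕ × Bool) : Prop := ∃ n, stepN l P n s = some x

lemma reach_refl (l : ℕ) (P : PD) (s : ℕ × ℕ × Bool) : Reach l P s s := ⟨0, rfl⟩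

lemma stepN_one (l : ℕ) (P : PD) (s : ℕ × ℕ × Bool) : stepN l P 1 s = nextState l P s := by
  show (nextState l P s).bind (stepN l P 0) = nextState l P s
  cases nextState l P s <;> rfl

lemma stepN_add (l : ℕ) (P : PD) (m n : ℕ) (s : ℕ × ℕ × Bool) :
    stepN l P (m + n) s = (stepN l P m s).bind (stepN l P n) := by
  induction m generalizing s with
  | zero =>
    show stepN l P (0 + n) s = (some s).bind (stepN l P n)
    rw [Nat.zero_add, Option.bind_some]
  | succ m ih =>
    have e : m + 1 + n = (m + n) + 1 := by omega
    rw [e]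
    show (nextState l P s).bind (stepN l P (m + n)) = _
    show _ = ((nextState l P s).bind (stepN l P m)).bind (stepN l P n)
    cases h : nextState l P s with
    | none => rfl
    | some s' => simp only [Option.bind_some]; exact ih s'

lemma stepN_succ' (l : ℕ) (P : PD) (n : ℕ) (s : ℕ × ℕ × Bool) :
    stepN l P (n + 1) s = (stepN l P n s).bind (nextState l P) := by
  rw [stepN_add l P n 1]
  cases stepN l P n s with
  | none => rfl
  | some s' => simp only [Option.bind_some]; exact stepN_one l P s'

lemma reach_trans {l : ℕ} {P : PD} {s x y : ℕ × ℕ × Bool}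
    (h1 : Reach l P s x) (h2 : Reach l P x y) : Reach l P s y := by
  obtain ⟨m, hm⟩ := h1
  obtain ⟨n, hn⟩ := h2
  exact ⟨m + n, by rw [stepN_add, hm, Option.bind_some, hn]⟩

lemma nextState_cases {l : ℕ} {P : PD} {s s' : ℕ × ℕ × Bool}
    (h : nextState l P s = some s') :
    (s' = (s.1, s.2.1 + 1, true) ∧ s.2.1 + 1 < l ∧
      (((s.1, s.2.1) ∈ P ∧ s.2.2 = true) ∨ ((s.1, s.2.1) ∉ P ∧ s.2.2 = false))) ∨
    (s' = (s.1 - 1, s.2.1, false) ∧ 0 < s.1 ∧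
      ¬(((s.1, s.2.1) ∈ P ∧ s.2.2 = true) ∨ ((s.1, s.2.1) ∉ P ∧ s.2.2 = false))) := by
  rw [nextState_eq] at h
  split_ifs at h with h1 h2 h3
  · exact Or.inl ⟨(Option.some_inj.mp h).symm, h2, h1⟩
  · exact Or.inr ⟨(Option.some_inj.mp h).symm, h3, h1⟩

lemma stepN_measure {l : ℕ} {P : PD} {n : ℕ} {s x : ℕ × ℕ × Bool}
    (h : stepN l P n s = some x) : n + x.1 + (l - x.2.1) ≤ s.1 + (l - s.2.1) := by
  induction n generalizing s with
  | zero =>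
    have : s = x := Option.some_inj.mp h
    subst this; omega
  | succ n ih =>
    show n + 1 + x.1 + (l - x.2.1) ≤ s.1 + (l - s.2.1)
    have h' : (nextState l P s).bind (stepN l P n) = some x := h
    cases hns : nextState l P s with
    | none => rw [hns] at h'; simp at h'
    | some s' =>
      rw [hns, Option.bind_some] at h'
      have := ih h'
      rcases nextState_cases hns with ⟨rfl, hlt, _⟩ | ⟨rfl, hpos, _⟩ <;> simp at this <;> omega

lemma stepN_mono {l : ℕ} {P : PD} {n : ℕ} {s x : ℕ × ℕ × Bool}
    (h : stepN l P n s = some x) : x.1 ≤ s.1 ∧ s.2.1 ≤ x.2.1 := by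
  induction n generalizing s with
  | zero =>
    have : s = x := Option.some_inj.mp h
    subst this; omega
  | succ n ih =>
    have h' : (nextState l P s).bind (stepN l P n) = some x := h
    cases hns : nextState l P s with
    | none => rw [hns] at h'; simp at h'
    | some s' =>
      rw [hns, Option.bind_some] at h'
      have := ih h'
      rcases nextState_cases hns with ⟨rfl, hlt, _⟩ | ⟨rfl, hpos, _⟩ <;> simp at this <;> omega

lemma reach_mono {l : ℕ} {P : PD} {s x : ℕ × ℕ × Bool} (h : Reach l P s x) :
    x.1 ≤ s.1 ∧ s.2.1 ≤ x.2.1 := by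
  obtain ⟨n, hn⟩ := h; exact stepN_mono hn

lemma mem_traj_iff {l : ℕ} {P : PD} {f : ℕ} {s x : ℕ × ℕ × Bool} :
    x ∈ traj l P f s ↔ ∃ n ≤ f, stepN l P n s = some x := by
  induction f generalizing s with
  | zero =>
    simp only [traj, List.mem_singleton]
    constructor
    · rintro rfl; exact ⟨0, le_refl 0, rfl⟩
    · rintro ⟨n, hn, hs⟩
      have : n = 0 := by omega
      subst this; exact (Option.some_inj.mp hs).symm
  | succ f ih =>
    show x ∈ (s :: _) ↔ _
    cases hns : nextState l P s with
    | none =>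
      simp only [traj, hns, List.mem_singleton]
      constructor
      · rintro rfl; exact ⟨0, by omega, rfl⟩
      · rintro ⟨n, hn, hs⟩
        cases n with
        | zero => exact (Option.some_inj.mp hs).symm
        | succ n =>
          exfalso
          have : (nextState l P s).bind (stepN l P n) = some x := hs
          rw [hns] at this; simp at this
    | some s' =>
      simp only [traj, hns, List.mem_cons]
      rw [ih]
      constructor
      · rintro (rfl | ⟨n, hn, hs⟩)
        · exact ⟨0, by omega, rfl⟩
        · refine ⟨n + 1, by omega, ?_⟩
          show (nextState l P s).bind (stepN l P n) = some x
          rw [hns, Option.bind_some]; exact hs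
      · rintro ⟨n, hn, hs⟩
        cases n with
        | zero => exact Or.inl (Option.some_inj.mp hs).symm
        | succ n =>
          right
          have : (nextState l P s).bind (stepN l P n) = some x := hs
          rw [hns, Option.bind_some] at this
          exact ⟨n, by omega, this⟩

lemma passes_iff {k l : ℕ} {P : PD} {s : ℕ × ℕ × Bool} (hs : s.1 < k) (c : ℕ × ℕ) :
    passesThrough k l P s c ↔ ∃ x, Reach l P s x ∧ (x.1, x.2.1) = c := by
  rw [passesThrough]
  constructor
  · rintro ⟨st, hst, h⟩
    rw [mem_traj_iff] at hst
    obtain ⟨n, _, hn⟩ := hst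
    exact ⟨st, ⟨n, hn⟩, h⟩
  · rintro ⟨x, ⟨n, hn⟩, h⟩
    refine ⟨x, ?_, h⟩
    rw [mem_traj_iff]
    refine ⟨n, ?_, hn⟩
    have := stepN_measure hn
    omega

lemma nextState_inj {l : ℕ} {P : PD} {s1 s2 y : ℕ × ℕ × Bool}
    (h1 : nextState l P s1 = some y) (h2 : nextState l P s2 = some y) : s1 = s2 := by
  rcases nextState_cases h1 with ⟨e1, g1, c1⟩ | ⟨e1, g1, c1⟩ <;>
    rcases nextState_cases h2 with ⟨e2, g2, c2⟩ | ⟨e2, g2, c2⟩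
  · -- both east
    have s1a : s1.1 = y.1 := by rw [e1]
    have s1b : s1.2.1 + 1 = y.2.1 := by rw [e1]
    have s2a : s2.1 = y.1 := by rw [e2]
    have s2b : s2.2.1 + 1 = y.2.1 := by rw [e2]
    have htile : (s1.1, s1.2.1) = (s2.1, s2.2.1) := by rw [Prod.mk.injEq]; omega
    have hb : s1.2.2 = s2.2.2 := by
      by_cases hm : (s1.1, s1.2.1) ∈ P
      · have hm2 : (s2.1, s2.2.1) ∈ P := htile ▸ hm
        rcases c1 with ⟨_, b1⟩ | ⟨m1, _⟩
        · rcases c2 with ⟨_, b2⟩ | ⟨m2, _⟩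
          · rw [b1, b2]
          · exact absurd hm2 m2
        · exact absurd hm m1
      · have hm2 : (s2.1, s2.2.1) ∉ P := htile ▸ hm
        rcases c1 with ⟨m1, _⟩ | ⟨_, b1⟩
        · exact absurd m1 hm
        · rcases c2 with ⟨m2, _⟩ | ⟨_, b2⟩
          · exact absurd m2 hm2
          · rw [b1, b2]
    rw [Prod.ext_iff, Prod.ext_iff]
    exact ⟨by omega, by omega, hb⟩
  · exfalso
    have b1 : y.2.2 = true := by rw [e1]
    have b2 : y.2.2 = false := by rw [e2]
    rw [b1] at b2; exact Bool.noConfusion b2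
  · exfalso
    have b1 : y.2.2 = false := by rw [e1]
    have b2 : y.2.2 = true := by rw [e2]
    rw [b2] at b1; exact Bool.noConfusion b1
  · -- both north
    have s1a : s1.1 - 1 = y.1 := by rw [e1]
    have s1b : s1.2.1 = y.2.1 := by rw [e1]
    have s2a : s2.1 - 1 = y.1 := by rw [e2]
    have s2b : s2.2.1 = y.2.1 := by rw [e2]
    have htile : (s1.1, s1.2.1) = (s2.1, s2.2.1) := by rw [Prod.mk.injEq]; omega
    have hb : s1.2.2 = s2.2.2 := by
      by_cases hm : (s1.1, s1.2.1) ∈ P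
      · have hm2 : (s2.1, s2.2.1) ∈ P := htile ▸ hm
        cases b1 : s1.2.2 with
        | false =>
          cases b2 : s2.2.2 with
          | false => rfl
          | true => exact absurd (Or.inl ⟨hm2, b2⟩) c2
        | true => exact absurd (Or.inl ⟨hm, b1⟩) c1
      · have hm2 : (s2.1, s2.2.1) ∉ P := htile ▸ hm
        cases b1 : s1.2.2 with
        | false => exact absurd (Or.inr ⟨hm, b1⟩) c1
        | true =>
          cases b2 : s2.2.2 with
          | false => exact absurd (Or.inr ⟨hm2, b2⟩) c2
          | true => rfl
    rw [Prod.ext_iff, Prod.ext_iff]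
    exact ⟨by omega, by omega, hb⟩

lemma stepN_confluence {l : ℕ} {P : PD} :
    ∀ {n n' : ℕ} {s s' y : ℕ × ℕ × Bool}, stepN l P n s = some y →
      stepN l P n' s' = some y → n ≤ n' → stepN l P (n' - n) s' = some s := by
  intro n
  induction n with
  | zero =>
    intro n' s s' y h1 h2 _
    have : s = y := Option.some_inj.mp h1
    subst this
    simpa using h2
  | succ n ih =>
    intro n' s s' y h1 h2 hle
    obtain ⟨m, rfl⟩ : ∃ m, n' = m + 1 := ⟨n' - 1, by omega⟩
    rw [stepN_succ'] at h1 h2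
    cases hz1 : stepN l P n s with
    | none => rw [hz1] at h1; simp at h1
    | some z1 =>
      cases hz2 : stepN l P m s' with
      | none => rw [hz2] at h2; simp at h2
      | some z2 =>
        rw [hz1, Option.bind_some] at h1
        rw [hz2, Option.bind_some] at h2
        have hz : z1 = z2 := nextState_inj h1 h2
        subst hz
        have := ih hz1 hz2 (by omega)
        have e : m + 1 - (n + 1) = m - n := by omega
        rw [e]
        exact this

/-- The entry state on the boundary with index `b`. -/
def entryState (k b : ℕ) : ℕ × ℕ × Bool := if b < k then (b, 0, true) else (k - 1, b - k, false)

lemma entryState_fst (k b : ℕ) : (entryState k b).1 ≤ k - 1 := by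
  rw [entryState]
  split_ifs with h
  · show b ≤ k - 1; omega
  · show k - 1 ≤ k - 1; omega

lemma entryState_inj {k l a b : ℕ} (ha : a < k + l) (hb : b < k + l)
    (h : entryState k a = entryState k b) : a = b := by
  rw [entryState, entryState] at h
  split_ifs at h with h1 h2 h2
  · exact congrArg Prod.fst h
  · exact absurd (congrArg (fun p => p.2.2) h) (by simp)
  · exact absurd (congrArg (fun p => p.2.2) h) (by simp)
  · have := congrArg (fun p => p.2.1) h
    simp only at this
    omega

lemma reach_entry_unique {k l : ℕ} {P : PD} {a b : ℕ} (ha : a < k + l) (hb : b < k + l)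
    {x : ℕ × ℕ × Bool} (hxa : Reach l P (entryState k a) x)
    (hxb : Reach l P (entryState k b) x) : a = b := by
  have key : ∀ a b : ℕ, a < k + l → b < k + l →
      ∀ {n n' : ℕ}, stepN l P n (entryState k a) = some x →
      stepN l P n' (entryState k b) = some x → n ≤ n' → a = b := by
    intro a b ha hb n n' h1 h2 hle
    have hconf := stepN_confluence h1 h2 hle
    rcases Nat.eq_zero_or_pos (n' - n) with h0 | hpos
    · rw [h0] at hconf
      exact (entryState_inj hb ha (Option.some_inj.mp hconf)).symm
    · exfalso
      obtain ⟨r, hr⟩ : ∃ r, n' - n = r + 1 := ⟨n' - n - 1, by omega⟩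
      rw [hr, stepN_succ'] at hconf
      cases hz : stepN l P r (entryState k b) with
      | none => rw [hz] at hconf; simp at hconf
      | some z =>
        rw [hz, Option.bind_some] at hconf
        have hz1 : z.1 ≤ k - 1 := le_trans (stepN_mono hz).1 (entryState_fst k b)
        rcases nextState_cases hconf with ⟨e1, g1, _⟩ | ⟨e1, g1, _⟩
        · -- east step into entry: entry has second coord .2.2; east target is (z.1, z.2.1+1, true)
          rw [entryState] at e1
          split_ifs at e1 with hak
          · have : (0 : ℕ) = z.2.1 + 1 := congrArg (fun p => p.2.1) e1
            omega
          · have : (false : Bool) = true := congrArg (fun p => p.2.2) e1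
            exact Bool.noConfusion this
        · rw [entryState] at e1
          split_ifs at e1 with hak
          · have : (true : Bool) = false := congrArg (fun p => p.2.2) e1
            exact Bool.noConfusion this
          · have e2 : (k : ℕ) - 1 = z.1 - 1 := congrArg (fun p => p.1) e1
            omega
  obtain ⟨n, hn⟩ := hxa
  obtain ⟨n', hn'⟩ := hxb
  rcases le_total n n' with h | h
  · exact key a b ha hb hn hn' h
  · exact (key b a hb ha hn' hn h).symm

lemma stepN_congr {l : ℕ} {P P' : PD} :
    ∀ (n : ℕ) (s : ℕ × ℕ × Bool),
      (∀ x, Reach l P s x → ((x.1, x.2.1) ∈ P ↔ (x.1, x.2.1) ∈ P')) →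
      stepN l P n s = stepN l P' n s := by
  intro n
  induction n with
  | zero => intro s _; rfl
  | succ n ih =>
    intro s h
    have hnext : nextState l P s = nextState l P' s := by
      have hs := h s (reach_refl l P s)
      rw [nextState_eq, nextState_eq]
      have : (((s.1, s.2.1) ∈ P ∧ s.2.2 = true) ∨ ((s.1, s.2.1) ∉ P ∧ s.2.2 = false)) ↔
          (((s.1, s.2.1) ∈ P' ∧ s.2.2 = true) ∨ ((s.1, s.2.1) ∉ P' ∧ s.2.2 = false)) := by
        tauto
      exact if_congr this rfl rfl
    show (nextState l P s).bind (stepN l P n) = (nextState l P' s).bind (stepN l P' n)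
    rw [← hnext]
    cases hns : nextState l P s with
    | none => rfl
    | some s' =>
      simp only [Option.bind_some]
      apply ih
      intro x hx
      apply h
      exact reach_trans ⟨1, by rw [stepN_one]; exact hns⟩ hx


/-! #### Zigzag lemma -/

/-- `x` is read strictly after `e`. -/
def SA (x e : ℕ × ℕ) : Prop := e.1 < x.1 ∨ (x.1 = e.1 ∧ x.2 < e.2)

lemma stepN_extend {l : ℕ} {P : PD} {T : ℕ} {s x y : ℕ × ℕ × Bool}
    (h : stepN l P T s = some x) (h2 : nextState l P x = some y) :
    stepN l P (T + 1) s = some y := by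
  rw [stepN_succ', h, Option.bind_some]; exact h2

lemma zigzag (k l : ℕ) (P : PD) :
    ∀ (n i j : ℕ), (k + 2) * j + (k - i) ≤ n → i < k → j < l →
      (∀ x ∈ P, ¬ SA x (i, j)) →
      ((∃ T, stepN l P T (entryState k (i + j)) = some (i, j, true) ∧
        ∀ m < T, ∀ s, stepN l P m (entryState k (i + j)) = some s → SA (s.1, s.2.1) (i, j)) ∧
       (∃ T, stepN l P T (entryState k (i + j + 1)) = some (i, j, false) ∧
        ∀ m < T, ∀ s, stepN l P m (entryState k (i + j + 1)) = some s →
          SA (s.1, s.2.1) (i, j))) := by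
  intro n
  induction n using Nat.strong_induction_on with
  | _ n IH =>
    intro i j hn hi hj hP
    constructor
    · -- W part: pipe entering (i,j) from the west
      cases j with
      | zero =>
        refine ⟨0, ?_, by omega⟩
        show some (entryState k (i + 0)) = some (i, 0, true)
        rw [Nat.add_zero, entryState, if_pos hi]
      | succ j' =>
        have hn' : (k + 2) * j' + (k - i) < n := by
          have : (k + 2) * (j' + 1) = (k + 2) * j' + (k + 2) := by ring
          omega
        have hP' : ∀ x ∈ P, ¬ SA x (i, j') := by
          intro x hx hsa
          refine hP x hx ?_
          rcases hsa with h1 | ⟨h1, h2⟩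
          · exact Or.inl h1
          · exact Or.inr ⟨h1, by omega⟩
        have hj' : j' < l := by omega
        obtain ⟨_, T, hT, hpre⟩ := IH _ hn' i j' (le_refl _) hi hj' hP'
        have htile : ((i, j') : ℕ × ℕ) ∉ P := by
          intro hmem
          exact hP _ hmem (Or.inr ⟨rfl, by omega⟩)
        have hnext : nextState l P (i, j', false) = some (i, j' + 1, true) := by
          rw [nextState_eq]
          rw [if_pos (Or.inr ⟨htile, rfl⟩), if_pos (by show j' + 1 < l; omega)]
        have heq : i + j' + 1 = i + (j' + 1) := by omega
        rw [heq] at hT hpre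
        refine ⟨T + 1, stepN_extend hT hnext, ?_⟩
        intro m hm s hs
        rcases Nat.lt_or_ge m T with h | h
        · have := hpre m h s hs
          rcases this with h1 | ⟨h1, h2⟩
          · exact Or.inl h1
          · exact Or.inr ⟨h1, by omega⟩
        · have : m = T := by omega
          subst this
          rw [hT] at hs
          have : (i, j', false) = s := Option.some_inj.mp hs
          subst this
          exact Or.inr ⟨rfl, by show j' < j' + 1; omega⟩
    · -- S part: pipe entering (i,j) from the south
      rcases Nat.lt_or_ge (i + 1) k with hik | hik
      · have hn' : (k + 2) * j + (k - (i + 1)) < n := by omega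
        have hP' : ∀ x ∈ P, ¬ SA x (i + 1, j) := by
          intro x hx hsa
          refine hP x hx ?_
          rcases hsa with h1 | ⟨h1, h2⟩
          · exact Or.inl (by omega)
          · exact Or.inl (by omega)
        obtain ⟨⟨T, hT, hpre⟩, _⟩ := IH _ hn' (i + 1) j (le_refl _) hik hj hP'
        have htile : ((i + 1, j) : ℕ × ℕ) ∉ P := by
          intro hmem
          exact hP _ hmem (Or.inl (by omega))
        have htrue : ¬(((i + 1, j) : ℕ × ℕ) ∈ P ∧ (true : Bool) = true ∨
            ((i + 1, j) : ℕ × ℕ) ∉ P ∧ (true : Bool) = false) := by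
          rintro (⟨hmem, _⟩ | ⟨_, hfb⟩)
          · exact htile hmem
          · exact Bool.noConfusion hfb
        have hnext : nextState l P (i + 1, j, true) = some (i, j, false) := by
          rw [nextState_eq, if_neg htrue, if_pos (Nat.succ_pos i)]
          rfl
        have heq : i + 1 + j = i + j + 1 := by omega
        rw [heq] at hT hpre
        refine ⟨T + 1, stepN_extend hT hnext, ?_⟩
        intro m hm s hs
        rcases Nat.lt_or_ge m T with h | h
        · have := hpre m h s hs
          rcases this with h1 | ⟨h1, h2⟩
          · exact Or.inl (by omega)
          · exact Or.inl (by omega)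
        · have : m = T := by omega
          subst this
          rw [hT] at hs
          have : (i + 1, j, true) = s := Option.some_inj.mp hs
          subst this
          exact Or.inl (by show i < i + 1; omega)
      · -- i + 1 = k : entry itself
        refine ⟨0, ?_, by omega⟩
        show some (entryState k (i + j + 1)) = some (i, j, false)
        rw [entryState, if_neg (by omega)]
        have e1 : k - 1 = i := by omega
        have e2 : i + j + 1 - k = j := by omega
        rw [e1, e2]


/-! #### Peeling the last crossing of a reduced pipe dream -/

lemma posList_empty (k l : ℕ) : posList k l (∅ : PD) = [] := by
  rw [posList_eq_filter]
  simp

lemma pdDelta_empty (k l : ℕ) : pdDelta k l (∅ : PD) = 1 := by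
  rw [pdDelta, pdWord, posList_empty]
  rfl

lemma posList_peel {k l : ℕ} {Q : PD} (hgrid : InGrid k l Q) (hne : Q.Nonempty) :
    ∃ c0 : ℕ × ℕ, c0 ∈ Q ∧
      posList k l Q = posList k l (Q.erase c0) ++ [c0] ∧
      (∀ x ∈ Q.erase c0, readLT x c0) := by
  obtain ⟨x0, hx0⟩ := hne
  have hnil : posList k l Q ≠ [] := by
    intro h
    have : x0 ∈ posList k l Q := mem_posList.mpr ⟨hx0, hgrid x0 hx0⟩
    rw [h] at this
    exact List.not_mem_nil this
  set c0 := (posList k l Q).getLast hnil with hc0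
  have hsplit : posList k l Q = (posList k l Q).dropLast ++ [c0] :=
    (List.dropLast_append_getLast hnil).symm
  have hc0mem : c0 ∈ Q := (mem_posList.mp (List.getLast_mem hnil)).1
  have hnodup := nodup_posList k l Q
  have hpair := pairwise_posList k l Q
  have hnotin : c0 ∉ (posList k l Q).dropLast := by
    intro hmem
    have := hsplit ▸ hnodup
    rw [List.nodup_append] at this
    exact this.2.2 c0 hmem c0 (List.mem_singleton_self c0) rfl
  have hL : posList k l (Q.erase c0) = (posList k l Q).dropLast := by
    rw [posList_subset (Finset.erase_subset c0 Q)]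
    conv_lhs => rw [hsplit]
    rw [List.filter_append]
    have h1 : List.filter (fun x => decide (x ∈ Q.erase c0)) [c0] = [] := by
      simp [Finset.notMem_erase]
    rw [h1, List.append_nil]
    apply List.filter_eq_self.mpr
    intro x hx
    simp only [decide_eq_true_eq, Finset.mem_erase]
    refine ⟨fun h => hnotin (h ▸ hx), ?_⟩
    have : x ∈ posList k l Q := by rw [hsplit]; exact List.mem_append_left _ hx
    exact (mem_posList.mp this).1
  refine ⟨c0, hc0mem, by rw [hL]; exact hsplit, ?_⟩
  intro x hx
  have hx' : x ∈ (posList k l Q).dropLast := hL ▸ (mem_posList.mpr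
    ⟨hx, hgrid x (Finset.mem_of_mem_erase hx)⟩)
  have := hsplit ▸ hpair
  rw [List.pairwise_append] at this
  exact this.2.2 x hx' c0 (List.mem_singleton_self c0)

lemma length_pdWord {k l : ℕ} {Q : PD} (hgrid : InGrid k l Q) :
    (pdWord k l Q).length = Q.card := by
  rw [pdWord, List.length_map, length_posList hgrid]

lemma reduced_peel {k l : ℕ} {Q : PD} (hgrid : InGrid k l Q) (hne : Q.Nonempty)
    (hred : clen (pdDelta k l Q) = Q.card) :
    ∃ c0 ∈ Q, (∀ x ∈ Q.erase c0, readLT x c0) ∧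
      clen (pdDelta k l (Q.erase c0)) = (Q.erase c0).card ∧
      pdDelta k l Q = pdDelta k l (Q.erase c0) * sGen (c0.1 + c0.2) ∧
      pdDelta k l (Q.erase c0) (c0.1 + c0.2) <
        pdDelta k l (Q.erase c0) (c0.1 + c0.2 + 1) := by
  obtain ⟨c0, hc0mem, hsplit, hlt⟩ := posList_peel hgrid hne
  have hgrid' : InGrid k l (Q.erase c0) := fun x hx => hgrid x (Finset.mem_of_mem_erase hx)
  have hword : pdWord k l Q = pdWord k l (Q.erase c0) ++ [c0.1 + c0.2] := by
    rw [pdWord, hsplit, List.map_append, pdWord]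
    rfl
  have hcard : Q.card = (Q.erase c0).card + 1 := by
    rw [Finset.card_erase_of_mem hc0mem]
    have : 0 < Q.card := Finset.card_pos.mpr ⟨c0, hc0mem⟩
    omega
  have hlen' : (pdWord k l (Q.erase c0)).length = (Q.erase c0).card := length_pdWord hgrid'
  have h1 : clen (pdDelta k l (Q.erase c0)) ≤ (Q.erase c0).card := by
    rw [← hlen']; exact clen_demWord_le _
  have h2 : clen (pdDelta k l Q) ≤ clen (pdDelta k l (Q.erase c0)) + 1 := by
    rw [pdDelta, hword, demWord_concat]
    exact clen_demStep_le (fs_demWord _) _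
  have hred' : clen (pdDelta k l (Q.erase c0)) = (Q.erase c0).card := by omega
  have hstep := reduced_step (ws := pdWord k l (Q.erase c0)) (a := c0.1 + c0.2)
    (by rw [hlen']; exact hred')
    (by rw [← hword, hlen']
        show clen (pdDelta k l Q) = _
        omega)
  refine ⟨c0, hc0mem, hlt, hred', ?_, hstep.1⟩
  rw [pdDelta, hword]
  exact hstep.2


/-! #### Crossings correspond to inversions -/

lemma stepN_peel {l : ℕ} {Pd : PD} {T n : ℕ} {s0 cs x : ℕ × ℕ × Bool}
    (hT : stepN l Pd T s0 = some cs) (hn : stepN l Pd n s0 = some x) (hlt : T < n) :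
    ∃ y r, nextState l Pd cs = some y ∧ stepN l Pd r y = some x ∧ n = T + 1 + r := by
  obtain ⟨r, rfl⟩ : ∃ r, n = T + (r + 1) := ⟨n - T - 1, by omega⟩
  rw [stepN_add, hT, Option.bind_some] at hn
  have hn' : (nextState l Pd cs).bind (stepN l Pd r) = some x := hn
  cases hy : nextState l Pd cs with
  | none => rw [hy] at hn'; exact absurd hn' (by simp)
  | some y =>
    rw [hy, Option.bind_some] at hn'
    exact ⟨y, r, rfl, hn', by omega⟩

lemma mainC (k l : ℕ) :
    ∀ (N : ℕ) (Q : PD), Q.card ≤ N → InGrid k l Q →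
      clen (pdDelta k l Q) = Q.card → ∀ a b : ℕ, a < b → b < k + l →
      ((∃ c ∈ Q,
          (Reach l Q (entryState k a) (c.1, c.2, true) ∧
            Reach l Q (entryState k b) (c.1, c.2, false)) ∨
          (Reach l Q (entryState k a) (c.1, c.2, false) ∧
            Reach l Q (entryState k b) (c.1, c.2, true))) ↔
        pdDelta k l Q b < pdDelta k l Q a) := by
  intro N
  induction N with
  | zero =>
    intro Q hcard _ _ a b hab _
    have hQe : Q = ∅ := Finset.card_eq_zero.mp (by omega)
    subst hQe
    rw [pdDelta_empty]
    apply iff_of_false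
    · rintro ⟨c, hc, _⟩; exact absurd hc (Finset.notMem_empty c)
    · simp only [Equiv.Perm.one_apply]; omega
  | succ N IH =>
    intro Q hcard hgrid hred a b hab hb
    rcases Finset.eq_empty_or_nonempty Q with rfl | hne
    · rw [pdDelta_empty]
      apply iff_of_false
      · rintro ⟨c, hc, _⟩; exact absurd hc (Finset.notMem_empty c)
      · simp only [Equiv.Perm.one_apply]; omega
    obtain ⟨c0, hc0Q, hreadlt, hred', hmul, hinc⟩ := reduced_peel hgrid hne hred
    set Q' := Q.erase c0 with hQ'def
    set m0 := c0.1 + c0.2 with hm0def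
    have hgrid' : InGrid k l Q' := fun x hx => hgrid x (Finset.mem_of_mem_erase hx)
    have hcard' : Q'.card ≤ N := by
      rw [hQ'def, Finset.card_erase_of_mem hc0Q]
      have h2 : 0 < Q.card := Finset.card_pos.mpr hne
      omega
    have hc0k : c0.1 < k := (hgrid c0 hc0Q).1
    have hc0l : c0.2 < l := (hgrid c0 hc0Q).2
    have hm1 : m0 + 1 < k + l := by omega
    have hval : ∀ x, pdDelta k l Q x = pdDelta k l Q' (sGen m0 x) := by
      intro x; rw [hmul]; exact Equiv.Perm.mul_apply _ _ _
    have hsval : sGen m0 m0 = m0 + 1 := by rw [sGen_apply]; simp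
    have hsval2 : sGen m0 (m0 + 1) = m0 := by rw [sGen_apply]; split_ifs <;> omega
    have hsval3 : ∀ x, x ≠ m0 → x ≠ m0 + 1 → sGen m0 x = x := by
      intro x h1 h2; rw [sGen_apply]; split_ifs <;> omega
    have hSAQ : ∀ x ∈ Q, ¬ SA x (c0.1, c0.2) := by
      intro x hx hsa
      rcases eq_or_ne x c0 with rfl | hxne
      · simp only [SA] at hsa; omega
      · have h1 := hreadlt x (Finset.mem_erase.mpr ⟨hxne, hx⟩)
        simp only [readLT] at h1
        simp only [SA] at hsa
        omega
    have hSAQ' : ∀ x ∈ Q', ¬ SA x (c0.1, c0.2) := fun x hx =>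
      hSAQ x (Finset.mem_of_mem_erase hx)
    obtain ⟨⟨TQW, zigQW, preQW⟩, ⟨TQS, zigQS, preQS⟩⟩ :=
      zigzag k l Q ((k + 2) * c0.2 + (k - c0.1)) c0.1 c0.2 le_rfl hc0k hc0l hSAQ
    obtain ⟨⟨TW', zigW', preW'⟩, ⟨TS', zigS', preS'⟩⟩ :=
      zigzag k l Q' ((k + 2) * c0.2 + (k - c0.1)) c0.1 c0.2 le_rfl hc0k hc0l hSAQ'
    have hc0notQ' : c0 ∉ Q' := Finset.notMem_erase c0 Q
    set eastIf : Option (ℕ × ℕ × Bool) :=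
      (if c0.2 + 1 < l then some (c0.1, c0.2 + 1, true) else none) with heast
    set northIf : Option (ℕ × ℕ × Bool) :=
      (if 0 < c0.1 then some (c0.1 - 1, c0.2, false) else none) with hnorth
    have hQe : nextState l Q (c0.1, c0.2, true) = eastIf := by
      rw [nextState_eq, if_pos]
      exact Or.inl ⟨hc0Q, rfl⟩
    have hQ'e : nextState l Q' (c0.1, c0.2, false) = eastIf := by
      rw [nextState_eq, if_pos]
      exact Or.inr ⟨hc0notQ', rfl⟩
    have hQn : nextState l Q (c0.1, c0.2, false) = northIf := by
      rw [nextState_eq, if_neg]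
      rintro (⟨_, hbool⟩ | ⟨hmem, _⟩)
      · exact Bool.noConfusion hbool
      · exact hmem hc0Q
    have hQ'n : nextState l Q' (c0.1, c0.2, true) = northIf := by
      rw [nextState_eq, if_neg]
      rintro (⟨hmem, _⟩ | ⟨_, hbool⟩)
      · exact hc0notQ' hmem
      · exact Bool.noConfusion hbool
    have hagreeE : ∀ y, eastIf = some y → ∀ n, stepN l Q n y = stepN l Q' n y := by
      intro y hy n
      have hform : y = (c0.1, c0.2 + 1, true) := by
        rw [heast] at hy
        split_ifs at hy with h
        exact (Option.some_inj.mp hy).symm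
      subst hform
      apply stepN_congr
      intro x hx
      have hx2 : c0.2 + 1 ≤ x.2.1 := (reach_mono hx).2
      have hnec : (x.1, x.2.1) ≠ c0 := by
        intro hc
        have h2 : x.2.1 = c0.2 := congrArg Prod.snd hc
        omega
      simp only [hQ'def, Finset.mem_erase]
      exact ⟨fun h => ⟨hnec, h⟩, fun h => h.2⟩
    have hagreeN : ∀ y, northIf = some y → ∀ n, stepN l Q n y = stepN l Q' n y := by
      intro y hy n
      have hpos : 0 < c0.1 := by
        rw [hnorth] at hy
        split_ifs at hy with h
        exact h
      have hform : y = (c0.1 - 1, c0.2, false) := by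
        rw [hnorth] at hy
        split_ifs at hy with h
        exact (Option.some_inj.mp hy).symm
      subst hform
      apply stepN_congr
      intro x hx
      have hx1 : x.1 ≤ c0.1 - 1 := (reach_mono hx).1
      have hnec : (x.1, x.2.1) ≠ c0 := by
        intro hc
        have h2 : x.1 = c0.1 := congrArg Prod.fst hc
        omega
      simp only [hQ'def, Finset.mem_erase]
      exact ⟨fun h => ⟨hnec, h⟩, fun h => h.2⟩
    have KT1 : ∀ x : ℕ × ℕ × Bool, (x.1, x.2.1) ∈ Q' →
        (Reach l Q (entryState k m0) x ↔ Reach l Q' (entryState k (m0 + 1)) x) := by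
      intro x hxQ'
      have hxnotc0 : (x.1, x.2.1) ≠ c0 := fun hc => hc0notQ' (hc ▸ hxQ')
      constructor
      · rintro ⟨n, hn⟩
        rcases Nat.lt_trichotomy n TQW with h | h | h
        · exact absurd (preQW n h x hn) (hSAQ' _ hxQ')
        · exfalso
          rw [h, zigQW] at hn
          have hx := Option.some_inj.mp hn
          exact hxnotc0 (by rw [← hx])
        · obtain ⟨y, r, hy, hr, _⟩ := stepN_peel zigQW hn h
          rw [hQe] at hy
          have hr' : stepN l Q' r y = some x := by rw [← hagreeE y hy r]; exact hr
          refine reach_trans ⟨TS', zigS'⟩ (reach_trans ⟨1, ?_⟩ ⟨r, hr'⟩)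
          rw [stepN_one, hQ'e]
          exact hy
      · rintro ⟨n, hn⟩
        rcases Nat.lt_trichotomy n TS' with h | h | h
        · exact absurd (preS' n h x hn) (hSAQ' _ hxQ')
        · exfalso
          rw [h, zigS'] at hn
          have hx := Option.some_inj.mp hn
          exact hxnotc0 (by rw [← hx])
        · obtain ⟨y, r, hy, hr, _⟩ := stepN_peel zigS' hn h
          rw [hQ'e] at hy
          have hr' : stepN l Q r y = some x := by rw [hagreeE y hy r]; exact hr
          refine reach_trans ⟨TQW, zigQW⟩ (reach_trans ⟨1, ?_⟩ ⟨r, hr'⟩)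
          rw [stepN_one, hQe]
          exact hy
    have KT2 : ∀ x : ℕ × ℕ × Bool, (x.1, x.2.1) ∈ Q' →
        (Reach l Q (entryState k (m0 + 1)) x ↔ Reach l Q' (entryState k m0) x) := by
      intro x hxQ'
      have hxnotc0 : (x.1, x.2.1) ≠ c0 := fun hc => hc0notQ' (hc ▸ hxQ')
      constructor
      · rintro ⟨n, hn⟩
        rcases Nat.lt_trichotomy n TQS with h | h | h
        · exact absurd (preQS n h x hn) (hSAQ' _ hxQ')
        · exfalso
          rw [h, zigQS] at hn
          have hx := Option.some_inj.mp hn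
          exact hxnotc0 (by rw [← hx])
        · obtain ⟨y, r, hy, hr, _⟩ := stepN_peel zigQS hn h
          rw [hQn] at hy
          have hr' : stepN l Q' r y = some x := by rw [← hagreeN y hy r]; exact hr
          refine reach_trans ⟨TW', zigW'⟩ (reach_trans ⟨1, ?_⟩ ⟨r, hr'⟩)
          rw [stepN_one, hQ'n]
          exact hy
      · rintro ⟨n, hn⟩
        rcases Nat.lt_trichotomy n TW' with h | h | h
        · exact absurd (preW' n h x hn) (hSAQ' _ hxQ')
        · exfalso
          rw [h, zigW'] at hn
          have hx := Option.some_inj.mp hn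
          exact hxnotc0 (by rw [← hx])
        · obtain ⟨y, r, hy, hr, _⟩ := stepN_peel zigW' hn h
          rw [hQ'n] at hy
          have hr' : stepN l Q r y = some x := by rw [hagreeN y hy r]; exact hr
          refine reach_trans ⟨TQS, zigQS⟩ (reach_trans ⟨1, ?_⟩ ⟨r, hr'⟩)
          rw [stepN_one, hQn]
          exact hy
    have KT3 : ∀ b' : ℕ, b' < k + l → b' ≠ m0 → b' ≠ m0 + 1 →
        (∀ x, Reach l Q (entryState k b') x ↔ Reach l Q' (entryState k b') x) ∧
        (∀ d, ¬ Reach l Q (entryState k b') (c0.1, c0.2, d)) := by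
      intro b' hb' hbm0 hbm1
      have hexcl : ∀ x, Reach l Q' (entryState k b') x → (x.1, x.2.1) ≠ c0 := by
        intro x hx hc
        have hx1 : x.1 = c0.1 := congrArg Prod.fst hc
        have hx2 : x.2.1 = c0.2 := congrArg Prod.snd hc
        have hxeq : x = (c0.1, c0.2, x.2.2) := by
          rw [Prod.ext_iff, Prod.ext_iff]
          exact ⟨hx1, hx2, rfl⟩
        rw [hxeq] at hx
        cases hd : x.2.2 with
        | true =>
          rw [hd] at hx
          exact hbm0 (reach_entry_unique hb' (by omega) hx ⟨TW', zigW'⟩)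
        | false =>
          rw [hd] at hx
          exact hbm1 (reach_entry_unique hb' hm1 hx ⟨TS', zigS'⟩)
      have hstep : ∀ n, stepN l Q' n (entryState k b') = stepN l Q n (entryState k b') := by
        intro n
        apply stepN_congr
        intro x hx
        have hnec := hexcl x hx
        simp only [hQ'def, Finset.mem_erase]
        exact ⟨fun h => h.2, fun h => ⟨hnec, h⟩⟩
      constructor
      · intro x
        constructor
        · rintro ⟨n, hn⟩; exact ⟨n, by rw [hstep]; exact hn⟩
        · rintro ⟨n, hn⟩; exact ⟨n, by rw [← hstep]; exact hn⟩
      · intro d hreach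
        obtain ⟨n, hn⟩ := hreach
        have hr' : Reach l Q' (entryState k b') (c0.1, c0.2, d) :=
          ⟨n, by rw [hstep]; exact hn⟩
        exact hexcl _ hr' rfl
    have transCross : ∀ a₁ b₁ a₂ b₂ : ℕ,
        (∀ x : ℕ × ℕ × Bool, (x.1, x.2.1) ∈ Q' →
          (Reach l Q (entryState k a₁) x ↔ Reach l Q' (entryState k a₂) x)) →
        (∀ x : ℕ × ℕ × Bool, (x.1, x.2.1) ∈ Q' →
          (Reach l Q (entryState k b₁) x ↔ Reach l Q' (entryState k b₂) x)) →
        ((∀ d, ¬ Reach l Q (entryState k a₁) (c0.1, c0.2, d)) ∨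
         (∀ d, ¬ Reach l Q (entryState k b₁) (c0.1, c0.2, d))) →
        ((∃ c ∈ Q, (Reach l Q (entryState k a₁) (c.1, c.2, true) ∧
              Reach l Q (entryState k b₁) (c.1, c.2, false)) ∨
            (Reach l Q (entryState k a₁) (c.1, c.2, false) ∧
              Reach l Q (entryState k b₁) (c.1, c.2, true))) ↔
         (∃ c ∈ Q', (Reach l Q' (entryState k a₂) (c.1, c.2, true) ∧
              Reach l Q' (entryState k b₂) (c.1, c.2, false)) ∨
            (Reach l Q' (entryState k a₂) (c.1, c.2, false) ∧
              Reach l Q' (entryState k b₂) (c.1, c.2, true)))) := by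
      intro a₁ b₁ a₂ b₂ hA hB havoid
      constructor
      · rintro ⟨c, hcQ, hor⟩
        have hcne : c ≠ c0 := by
          rintro rfl
          rcases havoid with hav | hav
          · rcases hor with ⟨h1, _⟩ | ⟨h1, _⟩
            · exact hav true h1
            · exact hav false h1
          · rcases hor with ⟨_, h2⟩ | ⟨_, h2⟩
            · exact hav false h2
            · exact hav true h2
        have hcQ' : c ∈ Q' := Finset.mem_erase.mpr ⟨hcne, hcQ⟩
        refine ⟨c, hcQ', ?_⟩
        rcases hor with ⟨h1, h2⟩ | ⟨h1, h2⟩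
        · exact Or.inl ⟨(hA _ hcQ').mp h1, (hB _ hcQ').mp h2⟩
        · exact Or.inr ⟨(hA _ hcQ').mp h1, (hB _ hcQ').mp h2⟩
      · rintro ⟨c, hcQ', hor⟩
        refine ⟨c, Finset.mem_of_mem_erase hcQ', ?_⟩
        rcases hor with ⟨h1, h2⟩ | ⟨h1, h2⟩
        · exact Or.inl ⟨(hA _ hcQ').mpr h1, (hB _ hcQ').mpr h2⟩
        · exact Or.inr ⟨(hA _ hcQ').mpr h1, (hB _ hcQ').mpr h2⟩
    have hIH := IH Q' hcard' hgrid' hred'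
    rcases eq_or_ne a m0 with rfl | ham0
    · rcases eq_or_ne b (m0 + 1) with rfl | hbm1
      · apply iff_of_true
        · exact ⟨c0, hc0Q, Or.inl ⟨⟨TQW, zigQW⟩, ⟨TQS, zigQS⟩⟩⟩
        · rw [hval (m0 + 1), hval m0, hsval, hsval2]
          exact hinc
      · have hbm0 : b ≠ m0 := by omega
        rw [transCross m0 b (m0 + 1) b KT1 (fun x _ => (KT3 b hb hbm0 hbm1).1 x)
              (Or.inr (KT3 b hb hbm0 hbm1).2)]
        rw [hIH (m0 + 1) b (by omega) hb]
        rw [hval b, hval m0, hsval, hsval3 b hbm0 hbm1]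
    · rcases eq_or_ne a (m0 + 1) with rfl | ham1
      · have hbm0 : b ≠ m0 := by omega
        have hbm1 : b ≠ m0 + 1 := by omega
        rw [transCross (m0 + 1) b m0 b KT2 (fun x _ => (KT3 b hb hbm0 hbm1).1 x)
              (Or.inr (KT3 b hb hbm0 hbm1).2)]
        rw [hIH m0 b (by omega) hb]
        rw [hval b, hval (m0 + 1), hsval2, hsval3 b hbm0 hbm1]
      · rcases eq_or_ne b m0 with rfl | hbm0
        · rw [transCross a m0 a (m0 + 1) (fun x _ => (KT3 a (by omega) ham0 ham1).1 x) KT1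
                (Or.inl (KT3 a (by omega) ham0 ham1).2)]
          rw [hIH a (m0 + 1) (by omega) hm1]
          rw [hval m0, hval a, hsval, hsval3 a ham0 ham1]
        · rcases eq_or_ne b (m0 + 1) with rfl | hbm1
          · rw [transCross a (m0 + 1) a m0 (fun x _ => (KT3 a (by omega) ham0 ham1).1 x) KT2
                  (Or.inl (KT3 a (by omega) ham0 ham1).2)]
            rw [hIH a m0 (by omega) (by omega)]
            rw [hval (m0 + 1), hval a, hsval2, hsval3 a ham0 ham1]
          · rw [transCross a b a b (fun x _ => (KT3 a (by omega) ham0 ham1).1 x)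
                  (fun x _ => (KT3 b hb hbm0 hbm1).1 x)
                  (Or.inl (KT3 a (by omega) ham0 ham1).2)]
            rw [hIH a b hab hb]
            rw [hval b, hval a, hsval3 a ham0 ham1, hsval3 b hbm0 hbm1]


/-! #### The crux: an elbow on the reading frontier is absorbed iff its pipes cross -/

lemma crux {k l : ℕ} {D Q : PD} {e : ℕ × ℕ}
    (hgridD : InGrid k l D) (he1 : e.1 < k) (he2 : e.2 < l) (heD : e ∉ D)
    (hQ : ∀ x, x ∈ Q ↔ (x ∈ D ∧ readLT x e))
    (hred : clen (pdDelta k l Q) = Q.card) :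
    (pdDelta k l Q (e.1 + e.2 + 1) < pdDelta k l Q (e.1 + e.2)) ↔
      (∃ c ∈ D, passesThrough k l D (e.1, e.2, true) c ∧
        passesThrough k l D (e.1, e.2, false) c) := by
  have hgridQ : InGrid k l Q := fun x hx => hgridD x ((hQ x).mp hx).1
  have heQ : e ∉ Q := fun h => by
    have := ((hQ e).mp h).2
    simp only [readLT] at this
    omega
  have hm1 : e.1 + e.2 + 1 < k + l := by omega
  have hSAQ : ∀ x ∈ Q, ¬ SA x (e.1, e.2) := by
    intro x hx hsa
    have h1 := ((hQ x).mp hx).2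
    simp only [readLT] at h1
    simp only [SA] at hsa
    omega
  obtain ⟨⟨TW, zigW, preW⟩, ⟨TS, zigS, preS⟩⟩ :=
    zigzag k l Q ((k + 2) * e.2 + (k - e.1)) e.1 e.2 le_rfl he1 he2 hSAQ
  -- trajectories from `e` agree in `Q` and `D`
  have hagree : ∀ d : Bool, ∀ n, stepN l Q n (e.1, e.2, d) = stepN l D n (e.1, e.2, d) := by
    intro d n
    apply stepN_congr
    intro x hx
    have hx1 : x.1 ≤ e.1 := (reach_mono hx).1
    have hx2 : e.2 ≤ x.2.1 := (reach_mono hx).2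
    rw [hQ]
    constructor
    · intro h; exact h.1
    · intro h
      refine ⟨h, ?_⟩
      have hne : (x.1, x.2.1) ≠ e := fun hc => heD (hc ▸ h)
      simp only [readLT]
      rcases Nat.lt_or_ge x.1 e.1 with h1 | h1
      · exact Or.inl h1
      · have hx1e : x.1 = e.1 := by omega
        right
        refine ⟨hx1e, ?_⟩
        rcases Nat.lt_or_ge e.2 x.2.1 with h2 | h2
        · exact h2
        · exfalso
          apply hne
          have : x.2.1 = e.2 := by omega
          rw [Prod.mk.injEq]
          exact ⟨hx1e, this⟩
  have hcross := mainC k l Q.card Q le_rfl hgridQ hred (e.1 + e.2) (e.1 + e.2 + 1)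
    (by omega) hm1
  rw [← hcross]
  constructor
  · rintro ⟨c, hcQ, hor⟩
    have hcD : c ∈ D := ((hQ c).mp hcQ).1
    have hkey : ∀ (d : Bool) (T n : ℕ) (en : ℕ × ℕ × Bool),
        stepN l Q T en = some (e.1, e.2, d) →
        (∀ m < T, ∀ s, stepN l Q m en = some s → SA (s.1, s.2.1) (e.1, e.2)) →
        ∀ d', Reach l Q en (c.1, c.2, d') → Reach l D (e.1, e.2, d) (c.1, c.2, d') := by
      intro d T n' en hT hpre d' ⟨n, hn⟩
      rcases Nat.lt_trichotomy n T with h | h | h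
      · exact absurd (hpre n h _ hn) (hSAQ c hcQ)
      · exfalso
        rw [h, hT] at hn
        have hx := Option.some_inj.mp hn
        have : e = c := by
          have h1 : e.1 = c.1 := congrArg (fun p => p.1) hx
          have h2 : e.2 = c.2 := congrArg (fun p => p.2.1) hx
          rw [Prod.ext_iff]; exact ⟨h1, h2⟩
        exact heD (this ▸ hcD)
      · have hsuf : stepN l Q (n - T) (e.1, e.2, d) = some (c.1, c.2, d') := by
          have h2 : T + (n - T) = n := by omega
          rw [← h2, stepN_add, hT, Option.bind_some] at hn
          exact hn
        rw [hagree d] at hsuf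
        exact ⟨n - T, hsuf⟩
    have hpass : ∀ (d : Bool) (x : ℕ × ℕ × Bool), Reach l D (e.1, e.2, d) x →
        (x.1, x.2.1) = c → passesThrough k l D (e.1, e.2, d) c := by
      intro d x hx hc
      rw [passes_iff he1]
      exact ⟨x, hx, hc⟩
    rcases hor with ⟨h1, h2⟩ | ⟨h1, h2⟩
    · exact ⟨c, hcD, hpass true _ (hkey true TW 0 _ zigW preW true h1) rfl,
        hpass false _ (hkey false TS 0 _ zigS preS false h2) rfl⟩
    · exact ⟨c, hcD, hpass true _ (hkey true TW 0 _ zigW preW false h1) rfl,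
        hpass false _ (hkey false TS 0 _ zigS preS true h2) rfl⟩
  · rintro ⟨c, hcD, hp1, hp2⟩
    rw [passes_iff he1] at hp1 hp2
    obtain ⟨x, hxr, hxc⟩ := hp1
    obtain ⟨y, hyr, hyc⟩ := hp2
    -- transfer to Q
    have hxrQ : Reach l Q (e.1, e.2, true) x := by
      obtain ⟨n, hn⟩ := hxr
      exact ⟨n, by rw [hagree]; exact hn⟩
    have hyrQ : Reach l Q (e.1, e.2, false) y := by
      obtain ⟨n, hn⟩ := hyr
      exact ⟨n, by rw [hagree]; exact hn⟩
    have hcQ : c ∈ Q := by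
      rw [hQ]
      refine ⟨hcD, ?_⟩
      have hx1 : x.1 ≤ e.1 := (reach_mono hxrQ).1
      have hx2 : e.2 ≤ x.2.1 := (reach_mono hxrQ).2
      have hc1 : c.1 = x.1 := (congrArg Prod.fst hxc).symm
      have hc2 : c.2 = x.2.1 := (congrArg Prod.snd hxc).symm
      have hne : c ≠ e := fun hc => heD (hc ▸ hcD)
      simp only [readLT]
      rcases Nat.lt_or_ge c.1 e.1 with h1 | h1
      · exact Or.inl h1
      · have hc1e : c.1 = e.1 := by omega
        right
        refine ⟨hc1e, ?_⟩
        rcases Nat.lt_or_ge e.2 c.2 with h2 | h2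
        · exact h2
        · exfalso
          apply hne
          rw [Prod.ext_iff]
          exact ⟨hc1e, by omega⟩
    -- full pipes
    have hxfull : Reach l Q (entryState k (e.1 + e.2)) x := reach_trans ⟨TW, zigW⟩ hxrQ
    have hyfull : Reach l Q (entryState k (e.1 + e.2 + 1)) y := reach_trans ⟨TS, zigS⟩ hyrQ
    have hxform : x = (c.1, c.2, x.2.2) := by
      have h1 : x.1 = c.1 := congrArg Prod.fst hxc
      have h2 : x.2.1 = c.2 := congrArg Prod.snd hxc
      rw [Prod.ext_iff, Prod.ext_iff]
      exact ⟨h1, h2, rfl⟩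
    have hyform : y = (c.1, c.2, y.2.2) := by
      have h1 : y.1 = c.1 := congrArg Prod.fst hyc
      have h2 : y.2.1 = c.2 := congrArg Prod.snd hyc
      rw [Prod.ext_iff, Prod.ext_iff]
      exact ⟨h1, h2, rfl⟩
    have hxyne : x ≠ y := by
      rintro rfl
      have := reach_entry_unique (by omega : e.1 + e.2 < k + l) hm1 hxfull hyfull
      omega
    refine ⟨c, hcQ, ?_⟩
    rw [hxform] at hxfull
    rw [hyform] at hyfull
    cases hdx : x.2.2 with
    | true =>
      cases hdy : y.2.2 with
      | true =>
        exfalso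
        apply hxyne
        rw [hxform, hyform, hdx, hdy]
      | false =>
        rw [hdx] at hxfull
        rw [hdy] at hyfull
        exact Or.inl ⟨hxfull, hyfull⟩
    | false =>
      cases hdy : y.2.2 with
      | true =>
        rw [hdx] at hxfull
        rw [hdy] at hyfull
        exact Or.inr ⟨hxfull, hyfull⟩
      | false =>
        exfalso
        apply hxyne
        rw [hxform, hyform, hdx, hdy]


/-! #### Outer induction: reading a pipe dream and dropping absorbed letters -/

/-- The `D`-tiles among the first `t` tiles of `P` in reading order. -/
def DlF (k l : ℕ) (P D : PD) (t : ℕ) : List (ℕ × ℕ) :=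
  ((posList k l P).take t).filter (fun x => decide (x ∈ D))

/-- The Demazure product of the `D`-subword of the length-`t` prefix. -/
noncomputable def DuF (k l : ℕ) (P D : PD) (t : ℕ) : Equiv.Perm ℕ :=
  demWord ((DlF k l P D t).map (fun pq => pq.1 + pq.2))

lemma nodup_getElem?_iff {α : Type*} {L : List α} (h : L.Nodup) {i : ℕ}
    (hi : i < L.length) (i' : ℕ) : L[i']? = some L[i] ↔ i' = i := by
  constructor
  · intro hh
    rw [List.getElem?_eq_some_iff] at hh
    obtain ⟨hi', heq⟩ := hh
    exact (List.Nodup.getElem_inj_iff h).mp heq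
  · rintro rfl
    exact List.getElem?_eq_getElem hi

lemma pdWord_take_succ {k l : ℕ} {P : PD} {t : ℕ} (ht : t < (posList k l P).length) :
    (pdWord k l P).take (t + 1) =
      (pdWord k l P).take t ++ [(posList k l P)[t].1 + (posList k l P)[t].2] := by
  have hlen : t < (pdWord k l P).length := by rw [pdWord, List.length_map]; exact ht
  rw [List.take_succ, List.getElem?_eq_getElem hlen]
  congr 1
  show [(pdWord k l P)[t]] = _
  congr 1
  exact List.getElem_map _

lemma posList_take_succ {k l : ℕ} {P : PD} {t : ℕ} (ht : t < (posList k l P).length) :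
    (posList k l P).take (t + 1) = (posList k l P).take t ++ [(posList k l P)[t]] := by
  rw [List.take_succ, List.getElem?_eq_getElem ht]
  rfl

lemma DlF_succ_mem {k l : ℕ} {P D : PD} {t : ℕ} (ht : t < (posList k l P).length)
    (hmem : (posList k l P)[t] ∈ D) :
    DlF k l P D (t + 1) = DlF k l P D t ++ [(posList k l P)[t]] := by
  rw [DlF, posList_take_succ ht, List.filter_append, DlF]
  congr 1
  simp [hmem]

lemma DlF_succ_not_mem {k l : ℕ} {P D : PD} {t : ℕ} (ht : t < (posList k l P).length)
    (hmem : (posList k l P)[t] ∉ D) :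
    DlF k l P D (t + 1) = DlF k l P D t := by
  rw [DlF, posList_take_succ ht, List.filter_append, DlF]
  have : List.filter (fun x => decide (x ∈ D)) [(posList k l P)[t]] = [] := by
    simp [hmem]
  rw [this, List.append_nil]

lemma DlF_stable {k l : ℕ} {P D : PD} {t : ℕ} (ht : (posList k l P).length ≤ t) :
    DlF k l P D t = DlF k l P D (posList k l P).length := by
  rw [DlF, DlF, List.take_of_length_le ht, List.take_of_length_le le_rfl]

lemma DuF_succ_mem {k l : ℕ} {P D : PD} {t : ℕ} (ht : t < (posList k l P).length)
    (hmem : (posList k l P)[t] ∈ D) :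
    DuF k l P D (t + 1) =
      demStep (DuF k l P D t) ((posList k l P)[t].1 + (posList k l P)[t].2) := by
  rw [DuF, DlF_succ_mem ht hmem, List.map_append, List.map_singleton, demWord_concat]
  rfl

lemma DuF_succ_not_mem {k l : ℕ} {P D : PD} {t : ℕ} (ht : t < (posList k l P).length)
    (hmem : (posList k l P)[t] ∉ D) :
    DuF k l P D (t + 1) = DuF k l P D t := by
  rw [DuF, DlF_succ_not_mem ht hmem]
  rfl

lemma DuF_stable {k l : ℕ} {P D : PD} {t : ℕ} (ht : (posList k l P).length ≤ t) :
    DuF k l P D t = DuF k l P D (posList k l P).length := by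
  rw [DuF, DlF_stable ht]
  rfl

lemma DlF_prefix {k l : ℕ} {P D : PD} (hsub : D ⊆ P) (t : ℕ) :
    DlF k l P D t = (posList k l D).take ((DlF k l P D t).length) := by
  have h1 : DlF k l P D t <+: posList k l D := by
    rw [posList_subset hsub]
    exact (List.take_prefix t (posList k l P)).filter _
  exact List.prefix_iff_eq_take.mp h1

lemma clen_DuF {k l : ℕ} {P D : PD} (hsub : D ⊆ P) (hgridD : InGrid k l D)
    (hDred : clen (pdDelta k l D) = D.card) (t : ℕ) :
    clen (DuF k l P D t) = (DlF k l P D t).length := by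
  have h1 := DlF_prefix (k := k) (l := l) hsub t
  have hlen : (DlF k l P D t).length ≤ (posList k l D).length := by
    conv_lhs => rw [h1]
    rw [List.length_take]
    omega
  have h2 : (DlF k l P D t).map (fun pq => pq.1 + pq.2) =
      (pdWord k l D).take ((DlF k l P D t).length) := by
    conv_lhs => rw [h1]
    rw [pdWord, List.map_take]
  rw [DuF, h2]
  apply clen_demWord_take
  · rw [length_pdWord hgridD]
    exact hDred
  · rw [pdWord, List.length_map]
    exact hlen

/-- The generic invariant, with the absorbed-step hypothesis in `DuF` form. -/
lemma outer_inv_du {k l : ℕ} {P D : PD}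
    (H : ∀ (t : ℕ) (ht : t < (posList k l P).length), (posList k l P)[t]'ht ∉ D →
      demStep (DuF k l P D t) (((posList k l P)[t]'ht).1 + ((posList k l P)[t]'ht).2) =
        DuF k l P D t) :
    ∀ t, demWord ((pdWord k l P).take t) = DuF k l P D t := by
  intro t
  induction t with
  | zero => rfl
  | succ t ih =>
    rcases Nat.lt_or_ge t (posList k l P).length with ht | ht
    · rw [pdWord_take_succ ht, demWord_concat, ih]
      by_cases hmem : (posList k l P)[t] ∈ D
      · rw [DuF_succ_mem ht hmem]
      · rw [DuF_succ_not_mem ht hmem]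
        exact H t ht hmem
    · have hlenw : (pdWord k l P).length ≤ t := by
        rw [pdWord, List.length_map]; exact ht
      have e1 : (pdWord k l P).take (t + 1) = (pdWord k l P).take t := by
        rw [List.take_of_length_le hlenw, List.take_of_length_le (by omega)]
      rw [e1, ih, DuF_stable (t := t + 1) (D := D) (by omega), DuF_stable (t := t) (D := D) ht]

/-- The generic invariant, with the absorbed-step hypothesis in word form. -/
lemma outer_inv_wd {k l : ℕ} {P D : PD}
    (H : ∀ (t : ℕ) (ht : t < (posList k l P).length), (posList k l P)[t]'ht ∉ D →
      demWord ((pdWord k l P).take (t + 1)) = demWord ((pdWord k l P).take t)) :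
    ∀ t, demWord ((pdWord k l P).take t) = DuF k l P D t := by
  intro t
  induction t with
  | zero => rfl
  | succ t ih =>
    rcases Nat.lt_or_ge t (posList k l P).length with ht | ht
    · by_cases hmem : (posList k l P)[t] ∈ D
      · rw [pdWord_take_succ ht, demWord_concat, ih, DuF_succ_mem ht hmem]
      · rw [H t ht hmem, ih, DuF_succ_not_mem ht hmem]
    · have hlenw : (pdWord k l P).length ≤ t := by
        rw [pdWord, List.length_map]; exact ht
      have e1 : (pdWord k l P).take (t + 1) = (pdWord k l P).take t := by
        rw [List.take_of_length_le hlenw, List.take_of_length_le (by omega)]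
      rw [e1, ih, DuF_stable (t := t + 1) (D := D) (by omega), DuF_stable (t := t) (D := D) ht]

/-- At an elbow `e = pl[t] ∉ D` the `D`-prefix list is exactly the reading list of
`D ∩ {before e}`. -/
lemma DlF_eq_posList_filter {k l : ℕ} {P D : PD} (hD : InGrid k l D)
    (hsub : D ⊆ P) {t : ℕ} (ht : t < (posList k l P).length)
    (hnot : (posList k l P)[t] ∉ D) :
    DlF k l P D t =
      posList k l (D.filter (fun y => readLT y ((posList k l P)[t]))) := by
  have hpairP := pairwise_posList k l P
  have hnodP := nodup_posList k l P
  apply sorted_eq_of_mem_iff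
  · exact hpairP.sublist (List.filter_sublist.trans (List.take_sublist t _))
  · exact pairwise_posList k l _
  · exact (hnodP.sublist (List.filter_sublist.trans (List.take_sublist t _)))
  · exact nodup_posList k l _
  · intro x
    rw [mem_posList]
    constructor
    · intro hx
      rw [DlF, List.mem_filter] at hx
      obtain ⟨hx1, hx2⟩ := hx
      have hxD : x ∈ D := of_decide_eq_true hx2
      have hpw : ((posList k l P).take t ++ [(posList k l P)[t]]).Pairwise readLT := by
        have hsub2 := hpairP.sublist (List.take_sublist (t + 1) (posList k l P))
        rwa [posList_take_succ ht] at hsub2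
      have hxlt := (List.pairwise_append.mp hpw).2.2 x hx1 _ (List.mem_singleton_self _)
      exact ⟨Finset.mem_filter.mpr ⟨hxD, hxlt⟩, hD x hxD⟩
    · rintro ⟨hx1, _⟩
      rw [Finset.mem_filter] at hx1
      obtain ⟨hxD, hxlt⟩ := hx1
      have hxP : x ∈ posList k l P := mem_posList.mpr ⟨hsub hxD, hD x hxD⟩
      obtain ⟨i, hi, hieq⟩ := List.mem_iff_getElem.mp hxP
      have hit : i < t := by
        rcases Nat.lt_trichotomy i t with h | h | h
        · exact h
        · exfalso
          subst h
          exact hnot (hieq ▸ hxD)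
        · exfalso
          have := List.pairwise_iff_getElem.mp hpairP t i ht hi h
          rw [hieq] at this
          simp only [readLT] at this hxlt
          omega
      rw [DlF, List.mem_filter]
      constructor
      · have hi' : i < ((posList k l P).take t).length := by
          rw [List.length_take]
          omega
        have hgt : ((posList k l P).take t)[i] = (posList k l P)[i] :=
          List.getElem_take
        rw [← hieq, ← hgt]
        exact List.getElem_mem hi'
      · exact decide_eq_true hxD

/-- Packaged data at an elbow: `DuF t` is the Demazure product of the reduced
truncated pipe dream. -/
lemma DuF_elbow {k l : ℕ} {P D : PD} (hD : InGrid k l D) (hsub : D ⊆ P)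
    (hDred : clen (pdDelta k l D) = D.card) {t : ℕ} (ht : t < (posList k l P).length)
    (hnot : (posList k l P)[t] ∉ D) :
    DuF k l P D t = pdDelta k l (D.filter (fun y => readLT y ((posList k l P)[t]))) ∧
      clen (pdDelta k l (D.filter (fun y => readLT y ((posList k l P)[t])))) =
        (D.filter (fun y => readLT y ((posList k l P)[t]))).card := by
  set Q := D.filter (fun y => readLT y ((posList k l P)[t])) with hQdef
  have hgridQ : InGrid k l Q := fun x hx => hD x (Finset.mem_of_mem_filter x hx)
  have hDl := DlF_eq_posList_filter hD hsub ht hnot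
  have h1 : DuF k l P D t = pdDelta k l Q := by
    rw [DuF, hDl, pdDelta, pdWord]
  have h2 : clen (pdDelta k l Q) = Q.card := by
    rw [← h1, clen_DuF hsub hD hDred, hDl]
    exact length_posList hgridQ
  exact ⟨h1, h2⟩


/-! #### The two directions -/

lemma absorb_step {k l : ℕ} {P D : PD} (hD : InGrid k l D)
    (hsub : D ⊆ P) (hDred : clen (pdDelta k l D) = D.card)
    {t : ℕ} (ht : t < (posList k l P).length)
    (hnot : (posList k l P)[t] ∉ D)
    (habs : Absorbable k l D ((posList k l P)[t])) :
    demStep (DuF k l P D t) ((posList k l P)[t].1 + (posList k l P)[t].2) =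
      DuF k l P D t := by
  set e := (posList k l P)[t] with hedef
  obtain ⟨he1, he2, heD, hc⟩ := habs
  have hdata := DuF_elbow hD hsub hDred ht hnot
  have hQmem : ∀ x, x ∈ D.filter (fun y => readLT y e) ↔ x ∈ D ∧ readLT x e := by
    intro x; rw [Finset.mem_filter]
  have hcrux := crux hD he1 he2 heD hQmem hdata.2
  rw [hdata.1]
  apply demStep_of_gt (fs_demWord _)
  exact hcrux.mpr hc

lemma absorbable_of_step {k l : ℕ} {P D : PD} (hP : InGrid k l P) (hD : InGrid k l D)
    (hsub : D ⊆ P) (hDred : clen (pdDelta k l D) = D.card)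
    {t : ℕ} (ht : t < (posList k l P).length) (hnot : (posList k l P)[t] ∉ D)
    (hstep : demStep (DuF k l P D t) ((posList k l P)[t].1 + (posList k l P)[t].2) =
      DuF k l P D t) :
    Absorbable k l D ((posList k l P)[t]) := by
  set e := (posList k l P)[t] with hedef
  have heP : e ∈ P := (mem_posList.mp (List.getElem_mem ht)).1
  have he1 : e.1 < k := (hP e heP).1
  have he2 : e.2 < l := (hP e heP).2
  have hdata := DuF_elbow hD hsub hDred ht hnot
  have hQmem : ∀ x, x ∈ D.filter (fun y => readLT y e) ↔ x ∈ D ∧ readLT x e := by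
    intro x; rw [Finset.mem_filter]
  have hcrux := crux hD he1 he2 hnot hQmem hdata.2
  refine ⟨he1, he2, hnot, hcrux.mp ?_⟩
  rw [← hdata.1]
  set u := DuF k l P D t with hudef
  have hfs : FS u := fs_demWord _
  rcases lt_or_gt_of_ne (perm_ne_succ u (e.1 + e.2)) with h | h
  · exfalso
    have h2 : u = u * sGen (e.1 + e.2) := by
      conv_lhs => rw [← hstep, demStep_of_lt hfs h]
    have happ : u (e.1 + e.2) = (u * sGen (e.1 + e.2)) (e.1 + e.2) := by rw [← h2]
    rw [Equiv.Perm.mul_apply] at happ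
    have hs : sGen (e.1 + e.2) (e.1 + e.2) = e.1 + e.2 + 1 := by rw [sGen_apply]; simp
    rw [hs] at happ
    omega
  · exact h

lemma simp_of_absorb {k l : ℕ} {P D : PD} (hP : InGrid k l P) (hD : InGrid k l D)
    (hsub : D ⊆ P) (hDred : clen (pdDelta k l D) = D.card)
    (habs : ∀ e ∈ P, e ∉ D → Absorbable k l D e) :
    simplification k l P = D := by
  have hinv := outer_inv_du (k := k) (l := l) (P := P) (D := D) (fun t ht hnot => by
    apply absorb_step hD hsub hDred ht hnot
    exact habs _ (mem_posList.mp (List.getElem_mem ht)).1 hnot)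
  apply Finset.ext
  intro x
  rw [simplification, Finset.mem_filter]
  constructor
  · rintro ⟨hxP, hkeep⟩
    by_contra hxD
    obtain ⟨i, hi, hieq⟩ := List.mem_iff_getElem.mp (mem_posList.mpr ⟨hxP, hP x hxP⟩)
    have hsome : (posList k l P)[i]? = some x := by
      rw [List.getElem?_eq_getElem hi, hieq]
    apply hkeep i hsome
    rw [hinv (i + 1), hinv i]
    rw [DuF_succ_not_mem hi (by rw [hieq]; exact hxD)]
  · intro hxD
    refine ⟨hsub hxD, ?_⟩
    intro t hsome hEq
    rw [List.getElem?_eq_some_iff] at hsome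
    obtain ⟨ht, hteq⟩ := hsome
    rw [hinv (t + 1), hinv t] at hEq
    have hlen1 := clen_DuF hsub hD hDred (t + 1)
    have hlen0 := clen_DuF hsub hD hDred t
    rw [hEq] at hlen1
    rw [DlF_succ_mem ht (by rw [hteq]; exact hxD), List.length_append,
      List.length_singleton] at hlen1
    omega

lemma absorb_of_simp {k l : ℕ} {P D : PD} (hP : InGrid k l P) (hD : InGrid k l D)
    (hDred : clen (pdDelta k l D) = D.card) (hsimp : simplification k l P = D) :
    ∀ e ∈ P, e ∉ D → Absorbable k l D e := by
  have hsub : D ⊆ P := by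
    rw [← hsimp, simplification]
    exact Finset.filter_subset _ _
  have hH : ∀ (t : ℕ) (ht : t < (posList k l P).length), (posList k l P)[t]'ht ∉ D →
      demWord ((pdWord k l P).take (t + 1)) = demWord ((pdWord k l P).take t) := by
    intro t ht hnot
    have heP : (posList k l P)[t] ∈ P := (mem_posList.mp (List.getElem_mem ht)).1
    have hnotsimp : (posList k l P)[t] ∉ simplification k l P := by
      rw [hsimp]; exact hnot
    rw [simplification, Finset.mem_filter] at hnotsimp
    push_neg at hnotsimp
    obtain ⟨t', hsome, hEq⟩ := hnotsimp heP
    have ht' : t' = t := (nodup_getElem?_iff (nodup_posList k l P) ht t').mp hsome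
    rw [ht'] at hEq
    exact hEq
  have hinv := outer_inv_wd (k := k) (l := l) (P := P) (D := D) hH
  intro e heP heD
  obtain ⟨i, hi, hieq⟩ := List.mem_iff_getElem.mp (mem_posList.mpr ⟨heP, hP e heP⟩)
  have hnot : (posList k l P)[i] ∉ D := by rw [hieq]; exact heD
  have h1 := hH i hi hnot
  have hstep : demStep (DuF k l P D i) ((posList k l P)[i].1 + (posList k l P)[i].2) =
      DuF k l P D i := by
    have h2 : demStep (demWord ((pdWord k l P).take i))
        ((posList k l P)[i].1 + (posList k l P)[i].2) =
        demWord ((pdWord k l P).take i) := by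
      rw [← demWord_concat, ← pdWord_take_succ hi]
      exact h1
    rw [hinv i] at h2
    exact h2
  have := absorbable_of_step hP hD hsub hDred hi hnot hstep
  rwa [hieq] at this

end Stmt15Aux


/-- **Simplification = absorbing elbow tiles.**
A pipe dream `P` simplifies to a reduced pipe dream `D` if and only if `P` is obtained
from `D` by changing some (possibly empty) set of absorbable elbow tiles of `D` into
crossing tiles. -/
theorem stmt15 (k l : ℕ) (P D : PD) (hP : InGrid k l P) (hD : InGrid k l D)
    (hDred : D.card = clen (pdDelta k l D)) :
    simplification k l P = D ↔
      ∃ S : Finset (ℕ × ℕ), (∀ e ∈ S, Absorbable k l D e) ∧ P = D ∪ S := by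
  have hDred' : clen (pdDelta k l D) = D.card := hDred.symm
  constructor
  · intro hsimp
    have hsub : D ⊆ P := by
      rw [← hsimp, simplification]
      exact Finset.filter_subset _ _
    refine ⟨P \ D, ?_, ?_⟩
    · intro e he
      rw [Finset.mem_sdiff] at he
      exact absorb_of_simp hP hD hDred' hsimp e he.1 he.2
    · exact (Finset.union_sdiff_of_subset hsub).symm
  · rintro ⟨S, hS, rfl⟩
    apply simp_of_absorb hP hD Finset.subset_union_left hDred'
    intro e heP heD
    rcases Finset.mem_union.mp heP with h | h
    · exact absurd h heD
    · exact hS e h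

end
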